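/- arXiv:1509.08251 — 7 statements merged into one kernel-verified Lean document; each statement's English description precedes it below -/
import Mathlib

section
/- Let G=(V,E) be a finite simple undirected graph and let π be a partition of V. Suppose π' is obtained from π by a refining operation (R,S) for some π-closed sets R,S ⊆ V. Then for every stable partition ρ of V with π ⪯ ρ, it holds that π ⪯ π' ⪯ ρ. -/
/-- The number of neighbours of `u` in the cell of `w` of the partition `π`. -/
noncomputable def cellDeg {V : Type*} (G : SimpleGraph V) (π : Setoid V) (u w : V) : ℕ :=
  (G.neighborSet u ∩ {x | π.r x w}).ncard

/-- The partition (given as a setoid) `π` is stable for the graph `G`: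
any two vertices in a common cell have the same number of neighbours in every cell. -/
def IsStable {V : Type*} (G : SimpleGraph V) (π : Setoid V) : Prop :=
  ∀ u v, π.r u v → ∀ w, cellDeg G π u w = cellDeg G π v w

/-- `S` is `π`-closed, i.e. a union of cells of `π`. -/
def Closed {V : Type*} (π : Setoid V) (S : Set V) : Prop :=
  ∀ u v, π.r u v → (u ∈ S ↔ v ∈ S)

/-- `ρ` refines `π`; this is the paper's `π ⪯ ρ`. -/
def Finer {V : Type*} (ρ π : Setoid V) : Prop :=
  ∀ u v, ρ.r u v → π.r u v

/-- `C` is a cell of the partition `π`. -/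
def IsCell {V : Type*} (π : Setoid V) (C : Set V) : Prop :=
  ∃ w, C = {x | π.r x w}

/-- `π'` is obtained from `π` by the refining operation `(R, S)` (for `π`-closed `R`, `S`):
cells disjoint from `S` are unchanged, and two vertices of `S` stay in a common cell iff
they were `π`-equivalent and have the same number of neighbours in every cell of `π`
contained in `R` (such cells are exactly the cells of the elements of `R`). -/
def IsRefineOp {V : Type*} (G : SimpleGraph V) (π : Setoid V) (R S : Set V)
    (π' : Setoid V) : Prop :=
  Closed π R ∧ Closed π S ∧
    ∀ u v, π'.r u v ↔
      (π.r u v ∧ (u ∈ S → ∀ w ∈ R, cellDeg G π u w = cellDeg G π v w))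


lemma closed_ncard_eq {V : Type*} [Finite V] (G : SimpleGraph V) (ρ : Setoid V)
    (hst : IsStable G ρ) (T : Set V) (hT : Closed ρ T) (u v : V) (huv : ρ.r u v) :
    (G.neighborSet u ∩ T).ncard = (G.neighborSet v ∩ T).ncard := by
  classical
  have : Fintype V := Fintype.ofFinite V
  have : Fintype (Quotient ρ) := Fintype.ofFinite _
  have key : ∀ x : V, (G.neighborSet x ∩ T).ncard
      = ∑ q : Quotient ρ, ((G.neighborSet x ∩ T).toFinset.filter
          (fun y => (Quotient.mk ρ y) = q)).card := by
    intro x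
    rw [Set.ncard_eq_toFinset_card']
    exact Finset.card_eq_sum_card_fiberwise (fun y _ => Finset.mem_univ _)
  have fib : ∀ (x : V) (q : Quotient ρ),
      (((G.neighborSet x ∩ T).toFinset.filter (fun y => (Quotient.mk ρ y) = q)).card : ℕ)
      = if q.out ∈ T then cellDeg G ρ x q.out else 0 := by
    intro x q
    by_cases hq : q.out ∈ T
    · rw [if_pos hq]
      have hset : ((G.neighborSet x ∩ T).toFinset.filter
          (fun y => (Quotient.mk ρ y) = q) : Set V)
          = G.neighborSet x ∩ {y | ρ.r y q.out} := by
        ext y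
        simp only [Finset.coe_filter, Set.mem_toFinset, Set.mem_inter_iff,
          Set.mem_setOf_eq]
        constructor
        · rintro ⟨⟨hn, _⟩, hy⟩
          refine ⟨hn, ?_⟩
          have : (Quotient.mk ρ y) = Quotient.mk ρ q.out := by
            rw [hy, q.out_eq]
          exact Quotient.exact this
        · rintro ⟨hn, hy⟩
          have hqy : (Quotient.mk ρ y) = q := by
            rw [← q.out_eq]; exact Quotient.sound hy
          exact ⟨⟨hn, (hT y q.out hy).mpr hq⟩, hqy⟩
      have := congrArg Set.ncard hset
      rwa [Set.ncard_coe_finset] at this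
    · rw [if_neg hq]
      rw [Finset.card_eq_zero, Finset.filter_eq_empty_iff]
      intro y hy
      simp only [Set.mem_toFinset, Set.mem_inter_iff] at hy
      intro hyq
      apply hq
      have : ρ.r y q.out := Quotient.exact (hyq.trans q.out_eq.symm)
      exact (hT y q.out this).mp hy.2
  rw [key u, key v]
  apply Finset.sum_congr rfl
  intro q _
  rw [fib u q, fib v q]
  by_cases hq : q.out ∈ T
  · rw [if_pos hq, if_pos hq]
    exact hst u v huv q.out
  · rw [if_neg hq, if_neg hq]

/-- If `π'` is obtained from `π` by a refining operation `(R,S)`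
(for `π`-closed sets `R,S`), then for every stable partition `ρ` with `π ⪯ ρ` we have
`π ⪯ π' ⪯ ρ`. -/
theorem refineOp_safe {V : Type*} [Finite V] (G : SimpleGraph V)
    (π π' : Setoid V) (R S : Set V) (hop : IsRefineOp G π R S π')
    (ρ : Setoid V) (hρstable : IsStable G ρ) (hρπ : Finer ρ π) :
    Finer π' π ∧ Finer ρ π' := by
  obtain ⟨hR, hS, hrel⟩ := hop
  refine ⟨fun u v h => ((hrel u v).mp h).1, fun u v h => ?_⟩
  refine (hrel u v).mpr ⟨hρπ u v h, fun _ w _ => ?_⟩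
  have hT : Closed ρ {x | π.r x w} := by
    intro a b hab
    have hπab := hρπ a b hab
    constructor
    · intro ha; exact π.trans (π.symm hπab) ha
    · intro hb; exact π.trans hπab hb
  exact closed_ncard_eq G ρ hρstable _ hT u v h
end

section
/- Let G=(V,E) be a finite simple undirected graph. For every partition π of V there exists a unique coarsest stable partition refining π; that is, there is a stable partition ρ with π ⪯ ρ such that every stable partition σ with π ⪯ σ satisfies ρ ⪯ σ. -/
open scoped Classical


def refineStep {V : Type*} (G : SimpleGraph V) (π : Setoid V) : Setoid V where
  r u v := π.r u v ∧ ∀ w, cellDeg G π u w = cellDeg G π v w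
  iseqv := ⟨fun u => ⟨π.refl u, fun _ => rfl⟩,
    fun h => ⟨π.symm h.1, fun w => (h.2 w).symm⟩,
    fun h h' => ⟨π.trans h.1 h'.1, fun w => (h.2 w).trans (h'.2 w)⟩⟩

lemma cellDeg_eq_card {V : Type*} [Fintype V] (G : SimpleGraph V) (π : Setoid V) (u w : V) :
    cellDeg G π u w
      = (Finset.univ.filter (fun x => G.Adj u x ∧ π.r x w)).card := by
  classical
  rw [cellDeg, show (G.neighborSet u ∩ {x | π.r x w})
      = ↑(Finset.univ.filter (fun x => G.Adj u x ∧ π.r x w)) by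
    ext x; simp [SimpleGraph.neighborSet]]
  exact Set.ncard_coe_finset _

lemma cellDeg_eq_of_stable {V : Type*} [Finite V] (G : SimpleGraph V) (π σ : Setoid V)
    (hσ : IsStable G σ) (hle : ∀ u v, σ.r u v → π.r u v)
    {u v : V} (huv : σ.r u v) (w : V) :
    cellDeg G π u w = cellDeg G π v w := by
  classical
  have : Fintype V := Fintype.ofFinite V
  rw [cellDeg_eq_card, cellDeg_eq_card]
  rw [Finset.card_eq_sum_card_fiberwise
    (f := fun x => Quotient.mk σ x) (t := Finset.univ) (fun x _ => Finset.mem_univ _),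
    Finset.card_eq_sum_card_fiberwise
    (f := fun x => Quotient.mk σ x) (t := Finset.univ) (fun x _ => Finset.mem_univ _)]
  refine Finset.sum_congr rfl (fun b _ => ?_)
  have hfib : ∀ a, ((Finset.univ.filter (fun x => G.Adj a x ∧ π.r x w)).filter
      (fun x => Quotient.mk σ x = b)) = Finset.univ.filter
      (fun x => (G.Adj a x ∧ π.r x w) ∧ σ.r x b.out) := by
    intro a
    ext y
    simp only [Finset.mem_filter, Finset.mem_univ, true_and]
    constructor
    · rintro ⟨h1, h2⟩
      exact ⟨h1, Quotient.eq.mp (h2.trans b.out_eq.symm)⟩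
    · rintro ⟨h1, h2⟩
      exact ⟨h1, (Quotient.sound h2).trans b.out_eq⟩
  rw [hfib u, hfib v]
  by_cases hbw : π.r b.out w
  · have he : ∀ a : V, (Finset.univ.filter
        (fun x => (G.Adj a x ∧ π.r x w) ∧ σ.r x b.out))
        = Finset.univ.filter (fun x => G.Adj a x ∧ σ.r x b.out) := by
      intro a
      ext y
      simp only [Finset.mem_filter, Finset.mem_univ, true_and]
      constructor
      · rintro ⟨⟨h1, _⟩, h2⟩; exact ⟨h1, h2⟩
      · rintro ⟨h1, h2⟩
        exact ⟨⟨h1, π.trans (hle _ _ h2) hbw⟩, h2⟩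
    rw [he u, he v]
    have := hσ u v huv b.out
    rwa [cellDeg_eq_card, cellDeg_eq_card] at this
  · have he : ∀ a : V, (Finset.univ.filter
        (fun x => (G.Adj a x ∧ π.r x w) ∧ σ.r x b.out)) = ∅ := by
      intro a
      ext y
      simp only [Finset.mem_filter, Finset.mem_univ, true_and, Finset.notMem_empty,
        iff_false]
      rintro ⟨⟨_, h2⟩, h3⟩
      exact hbw (π.trans (π.symm (hle _ _ h3)) h2)
    rw [he u, he v]

lemma exists_coarsest {V : Type*} [Finite V] (G : SimpleGraph V) (π : Setoid V) :
    ∃ ρ : Setoid V, IsStable G ρ ∧ Finer ρ π ∧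
      ∀ σ : Setoid V, IsStable G σ → Finer σ π → Finer σ ρ := by
  have hfin : Finite (Setoid V) :=
    Finite.of_injective (fun s : Setoid V => s.r)
      (fun a b h => Setoid.ext fun x y => iff_of_eq (congrFun (congrFun h x) y))
  have wf : WellFounded ((· < ·) : Setoid V → Setoid V → Prop) :=
    Finite.to_wellFoundedLT.wf
  induction π using wf.induction with
  | _ π ih =>
    by_cases hst : IsStable G π
    · exact ⟨π, hst, fun u v h => h, fun σ _ hσ => hσ⟩
    · have hlt : refineStep G π < π := by
        have hle : refineStep G π ≤ π := fun x y h => h.1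
        refine lt_of_le_of_ne hle (fun heq => hst ?_)
        intro u v huv w
        have : (refineStep G π).r u v := by rw [heq]; exact huv
        exact this.2 w
      obtain ⟨ρ, hρst, hρle, hρmax⟩ := ih (refineStep G π) hlt
      refine ⟨ρ, hρst, fun u v h => (hρle u v h).1, fun σ hσst hσle => ?_⟩
      refine hρmax σ hσst (fun u v h => ?_)
      exact ⟨hσle u v h, cellDeg_eq_of_stable G π σ hσst hσle h⟩

/-- For every partition `π` of the vertex set of a finite graph there is a
unique coarsest stable partition refining it: a stable partition `ρ` refining `π` that is
refined by every stable partition refining `π`. -/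
theorem coarsest_stable_unique {V : Type*} [Finite V] (G : SimpleGraph V) (π : Setoid V) :
    ∃! ρ : Setoid V, IsStable G ρ ∧ Finer ρ π ∧
      ∀ σ : Setoid V, IsStable G σ → Finer σ π → Finer σ ρ := by
  obtain ⟨ρ, h1, h2, h3⟩ := exists_coarsest G π
  refine ⟨ρ, ⟨h1, h2, h3⟩, ?_⟩
  rintro ρ' ⟨h1', h2', h3'⟩
  have a : ρ' ≤ ρ := fun x y h => h3 ρ' h1' h2' x y h
  have b : ρ ≤ ρ' := fun x y h => h3' ρ h1 h2 x y h
  exact le_antisymm a b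
end

section
/- Let G=(V,E) be a finite simple undirected graph and let π be a stable partition of V. For every π-closed set S ⊆ V and all vertices u,v ∈ V: if the graph distance from u to S differs from the graph distance from v to S, then u and v lie in different cells of π. -/
open SimpleGraph in
lemma extract {V : Type*} (G : SimpleGraph V) (S : Set V) (x : V) (n : ℕ)
    (h : (⨅ s ∈ S, G.edist x s) ≤ n) : ∃ s ∈ S, G.edist x s ≤ n := by
  have h' : (⨅ s ∈ S, G.edist x s) < (n : ℕ∞) + 1 :=
    h.trans_lt ((ENat.lt_add_one_iff (by simp)).mpr le_rfl)
  obtain ⟨s, hs⟩ := iInf_lt_iff.mp h'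
  obtain ⟨hsS, hlt⟩ := iInf_lt_iff.mp hs
  exact ⟨s, hsS, (ENat.lt_add_one_iff (by simp)).mp hlt⟩


open SimpleGraph in
lemma key {V : Type*} [Finite V] (G : SimpleGraph V) (π : Setoid V)
    (hst : IsStable G π) (S : Set V) (hS : Closed π S) :
    ∀ n : ℕ, ∀ u v : V, π.r u v → (⨅ s ∈ S, G.edist v s) ≤ n →
      (⨅ s ∈ S, G.edist u s) ≤ n := by
  intro n
  induction n with
  | zero =>
    intro u v huv hv
    obtain ⟨s, hsS, hes⟩ := extract G S v 0 hv
    have hvs : v = s := by simpa [edist_eq_zero_iff] using le_antisymm hes zero_le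
    subst hvs
    have huS : u ∈ S := (hS u v huv).mpr hsS
    calc (⨅ s ∈ S, G.edist u s) ≤ G.edist u u := biInf_le _ huS
    _ = 0 := edist_self
  | succ n ih =>
    intro u v huv hv
    by_cases hvn : (⨅ s ∈ S, G.edist v s) ≤ n
    · exact (ih u v huv hvn).trans (by exact_mod_cast Nat.cast_le.mpr (Nat.le_succ n))
    obtain ⟨s, hsS, hes⟩ := extract G S v (n+1) hv
    have hvs : v ≠ s := by
      rintro rfl
      exact hvn ((biInf_le _ hsS).trans (by simp [SimpleGraph.edist_self]))
    have hfin : G.edist v s ≠ ⊤ := fun h => by rw [h, top_le_iff] at hes; exact ENat.coe_ne_top _ hes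
    obtain ⟨p, hp⟩ := exists_walk_of_edist_ne_top hfin
    cases p with
    | nil => exact absurd rfl hvs
    | cons hadj q =>
      rename_i w
      -- edist w s ≤ n
      have hws : G.edist w s ≤ n := by
        have h1 : G.edist w s ≤ q.length := edist_le q
        have h2 : (q.length : ℕ∞) + 1 ≤ (n : ℕ∞) + 1 := by
          rw [← hp] at hes
          simpa [Walk.length_cons, add_comm] using hes
        have h3 : q.length + 1 ≤ n + 1 := by exact_mod_cast h2
        exact h1.trans (by exact_mod_cast Nat.lt_succ_iff.mp h3)
      -- cellDeg v w ≥ 1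
      have hpos : 0 < cellDeg G π v w := by
        rw [cellDeg, Set.ncard_pos (Set.toFinite _)]
        exact ⟨w, hadj, π.refl w⟩
      rw [hst v u (π.symm huv) w] at hpos
      obtain ⟨w', hw'⟩ := (Set.ncard_pos (Set.toFinite _)).mp hpos
      obtain ⟨hadj', hrel'⟩ := hw'
      -- D w ≤ n, so D w' ≤ n
      have hDw : (⨅ t ∈ S, G.edist w t) ≤ n := (biInf_le _ hsS).trans hws
      have hDw' : (⨅ t ∈ S, G.edist w' t) ≤ n := ih w' w hrel' hDw
      obtain ⟨t, htS, het⟩ := extract G S w' n hDw'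
      calc (⨅ s ∈ S, G.edist u s) ≤ G.edist u t := biInf_le _ htS
      _ ≤ G.edist u w' + G.edist w' t := SimpleGraph.edist_triangle
      _ ≤ 1 + n := by
          gcongr
          exact le_of_eq (edist_eq_one_iff_adj.mpr hadj')
      _ = ((n+1 : ℕ) : ℕ∞) := by push_cast; ring


/-- If `π` is stable for `G` and `S` is `π`-closed, then any two vertices
at different (possibly infinite) distances from `S` lie in different cells of `π`. -/
theorem distance_separates {V : Type*} [Finite V] (G : SimpleGraph V) (π : Setoid V)
    (hst : IsStable G π) (S : Set V) (hS : Closed π S) (u v : V)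
    (hdist : (⨅ s ∈ S, G.edist u s) ≠ ⨅ s ∈ S, G.edist v s) :
    ¬ π.r u v := by
  intro huv
  apply hdist
  have mono : ∀ a b : V, π.r a b → (⨅ s ∈ S, G.edist a s) ≤ ⨅ s ∈ S, G.edist b s := by
    intro a b hab
    by_cases h : (⨅ s ∈ S, G.edist b s) = ⊤
    · simp [h]
    · obtain ⟨n, hn⟩ := WithTop.ne_top_iff_exists.mp h
      rw [← hn]
      exact key G π hst S hS n a b hab hn.ge
  exact le_antisymm (mono u v huv) (mono v u (π.symm huv))
end

section
/- Let G=(V,E) be a finite simple undirected graph, let π be a partition of V, and let π_∞ denote the coarsest stable partition of V refining π. If ρ is a partition with π ⪯ ρ ⪯ π_∞, then cost(π) ≥ cost(ρ). -/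
/-- The cost of the refining operation `(R,S)`: the number of pairs `(u,v)` with
`uv ∈ E(G)`, `u ∈ R`, `v ∈ S`. -/
noncomputable def opCost {V : Type*} (G : SimpleGraph V) (R S : Set V) : ℕ :=
  {p : V × V | G.Adj p.1 p.2 ∧ p.1 ∈ R ∧ p.2 ∈ S}.ncard

/-- `CostReach G π c` holds iff some sequence of effective refining operations starting
from `π` and ending in a stable partition has total cost `c`. -/
inductive CostReach {V : Type*} (G : SimpleGraph V) : Setoid V → ℕ → Prop
  | stable {π : Setoid V} (h : IsStable G π) : CostReach G π 0
  | step {π π' : Setoid V} {R S : Set V} {c : ℕ} (hop : IsRefineOp G π R S π')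
      (heff : π' ≠ π) (htail : CostReach G π' c) :
      CostReach G π (opCost G R S + c)

/-- The cost of a partition: the minimum total cost of a sequence of effective refining
operations transforming it into a stable partition. -/
noncomputable def cost {V : Type*} (G : SimpleGraph V) (π : Setoid V) : ℕ :=
  sInf {c : ℕ | CostReach G π c}

-- key counting lemma
lemma cellDeg_lift {V : Type*} [Fintype V] (G : SimpleGraph V) (ρ π : Setoid V)
    (hf : ∀ u v, ρ.r u v → π.r u v) (u v w : V)
    (h : ∀ x, π.r x w → (G.neighborSet u ∩ {y | ρ.r y x}).ncard
        = (G.neighborSet v ∩ {y | ρ.r y x}).ncard) :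
    (G.neighborSet u ∩ {y | π.r y w}).ncard = (G.neighborSet v ∩ {y | π.r y w}).ncard := by
  classical
  set cell : V → Finset V := fun x => Finset.univ.filter (fun y => ρ.r y x) with hcell
  set P : Finset V := Finset.univ.filter (fun y => π.r y w) with hP
  set T := P.image cell with hT
  have hmemcell : ∀ y x, y ∈ cell x ↔ ρ.r y x := by
    intro y x; simp [hcell]
  have hmemP : ∀ y, y ∈ P ↔ π.r y w := by intro y; simp [hP]
  have hcover : P = T.biUnion id := by
    ext y
    simp only [hT, Finset.mem_biUnion, Finset.mem_image, id]
    constructor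
    · intro hy
      exact ⟨cell y, ⟨y, hy, rfl⟩, (hmemcell y y).2 (ρ.refl' y)⟩
    · rintro ⟨C, ⟨x, hx, rfl⟩, hyC⟩
      exact (hmemP y).2 (π.trans' (hf _ _ ((hmemcell y x).1 hyC)) ((hmemP x).1 hx))
  have hcelleq : ∀ x x' y, y ∈ cell x → y ∈ cell x' → cell x = cell x' := by
    intro x x' y hy hy'
    ext z
    rw [hmemcell, hmemcell]
    have h1 := (hmemcell y x).1 hy
    have h2 := (hmemcell y x').1 hy'
    exact ⟨fun hz => ρ.trans' (ρ.trans' hz (ρ.symm' h1)) h2,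
      fun hz => ρ.trans' (ρ.trans' hz (ρ.symm' h2)) h1⟩
  have hcd : ∀ (σ : Setoid V) a b, (G.neighborSet a ∩ {y | σ.r y b}).ncard
      = ((Finset.univ.filter (fun y => σ.r y b)).filter (fun y => G.Adj a y)).card := by
    intro σ a b
    rw [show G.neighborSet a ∩ {y | σ.r y b}
        = ↑((Finset.univ.filter (fun y => σ.r y b)).filter (fun y => G.Adj a y)) by
      ext y; simp [SimpleGraph.neighborSet, and_comm]]
    exact Set.ncard_coe_finset _
  have hsum : ∀ a, ((Finset.univ.filter (fun y => π.r y w)).filter (fun y => G.Adj a y)).card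
      = ∑ C ∈ T, (C.filter (fun y => G.Adj a y)).card := by
    intro a
    rw [← hP, hcover, Finset.filter_biUnion, Finset.card_biUnion]
    · simp only [id]
    · intro C hC D hD hne
      obtain ⟨x, hx, rfl⟩ := Finset.mem_image.1 hC
      obtain ⟨x', hx', rfl⟩ := Finset.mem_image.1 hD
      simp only [id]
      apply Finset.disjoint_filter_filter
      rw [Finset.disjoint_left]
      intro y hyC hyD
      exact hne (hcelleq x x' y hyC hyD)
  rw [hcd, hcd, hsum, hsum]
  refine Finset.sum_congr rfl ?_
  intro C hC
  obtain ⟨x, hx, rfl⟩ := Finset.mem_image.1 hC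
  have := h x ((hmemP x).1 hx)
  rw [hcd, hcd] at this
  exact this

lemma cellDeg_lift' {V : Type*} [Finite V] (G : SimpleGraph V) (ρ π : Setoid V)
    (hf : ∀ u v, ρ.r u v → π.r u v) (u v w : V)
    (h : ∀ x, π.r x w → cellDeg G ρ u x = cellDeg G ρ v x) :
    cellDeg G π u w = cellDeg G π v w := by
  have : Fintype V := Fintype.ofFinite V
  simp only [cellDeg] at h ⊢
  exact cellDeg_lift G ρ π hf u v w h

lemma card_quot_lt {V : Type*} [Finite V] (π π' : Setoid V) (hf : Finer π' π)
    (hne : π' ≠ π) : Nat.card (Quotient π) < Nat.card (Quotient π') := by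
  let f : Quotient π' → Quotient π := Quot.map id (fun a b h => hf a b h)
  have hsurj : Function.Surjective f := by
    intro q
    obtain ⟨a⟩ := q
    exact ⟨Quot.mk _ a, rfl⟩
  by_contra hlt
  push_neg at hlt
  have hle := Nat.card_le_card_of_surjective f hsurj
  have hcard : Nat.card (Quotient π') = Nat.card (Quotient π) := le_antisymm hlt hle
  have hbij : Function.Bijective f :=
    (Nat.bijective_iff_surjective_and_card f).2 ⟨hsurj, hcard⟩
  apply hne
  ext u v
  constructor
  · exact hf u v
  · intro huv
    have : f (Quot.mk _ u) = f (Quot.mk _ v) := Quot.sound huv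
    exact Quotient.exact (hbij.1 this)

lemma card_quot_le {V : Type*} [Finite V] (π : Setoid V) :
    Nat.card (Quotient π) ≤ Nat.card V :=
  Nat.card_le_card_of_surjective (Quot.mk _) (fun q => by obtain ⟨a⟩ := q; exact ⟨a, rfl⟩)

lemma exists_reach {V : Type*} [Finite V] (G : SimpleGraph V) (π : Setoid V) :
    ∃ c, CostReach G π c := by
  have H : ∀ n (π : Setoid V), Nat.card V - Nat.card (Quotient π) ≤ n →
      ∃ c, CostReach G π c := by
    intro n
    induction n with
    | zero =>
      intro π hn
      by_cases hst : IsStable G π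
      · exact ⟨0, CostReach.stable hst⟩
      · exfalso
        rw [IsStable] at hst
        push_neg at hst
        obtain ⟨u, v, huv, w, hw⟩ := hst
        set π' : Setoid V := ⟨fun a b => π.r a b ∧ ∀ x, cellDeg G π a x = cellDeg G π b x,
          ⟨fun a => ⟨π.refl' a, fun _ => rfl⟩,
           fun h => ⟨π.symm' h.1, fun x => (h.2 x).symm⟩,
           fun h1 h2 => ⟨π.trans' h1.1 h2.1, fun x => (h1.2 x).trans (h2.2 x)⟩⟩⟩ with hπ'
        have hfe : Finer π' π := fun a b h => h.1
        have hne : π' ≠ π := by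
          intro he
          exact hw (((he ▸ huv : π'.r u v)).2 w)
        have h1 := card_quot_lt π π' hfe hne
        have h2 := card_quot_le (V := V) π'
        omega
      -- unreachable
    | succ n ih =>
      intro π hn
      by_cases hst : IsStable G π
      · exact ⟨0, CostReach.stable hst⟩
      · rw [IsStable] at hst
        push_neg at hst
        obtain ⟨u, v, huv, w, hw⟩ := hst
        set π' : Setoid V := ⟨fun a b => π.r a b ∧ ∀ x, cellDeg G π a x = cellDeg G π b x,
          ⟨fun a => ⟨π.refl' a, fun _ => rfl⟩,
           fun h => ⟨π.symm' h.1, fun x => (h.2 x).symm⟩,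
           fun h1 h2 => ⟨π.trans' h1.1 h2.1, fun x => (h1.2 x).trans (h2.2 x)⟩⟩⟩ with hπ'
        have hfe : Finer π' π := fun a b h => h.1
        have hne : π' ≠ π := by
          intro he
          exact hw (((he ▸ huv : π'.r u v)).2 w)
        have hop : IsRefineOp G π Set.univ Set.univ π' := by
          refine ⟨fun _ _ _ => Iff.rfl, fun _ _ _ => Iff.rfl, fun a b => ?_⟩
          constructor
          · intro h
            exact ⟨h.1, fun _ x _ => h.2 x⟩
          · intro h
            exact ⟨h.1, fun x => h.2 (Set.mem_univ a) x (Set.mem_univ x)⟩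
        have h1 := card_quot_lt π π' hfe hne
        have h2 := card_quot_le (V := V) π'
        obtain ⟨c, hc⟩ := ih π' (by omega)
        exact ⟨_, CostReach.step hop hne hc⟩
  exact H _ π le_rfl

lemma reach_mono {V : Type*} [Finite V] (G : SimpleGraph V) (π0 ω : Setoid V)
    (hωstable : IsStable G ω)
    (hcoarsest : ∀ σ : Setoid V, IsStable G σ → Finer σ π0 → Finer σ ω) :
    ∀ {π : Setoid V} {c : ℕ}, CostReach G π c → ∀ ρ : Setoid V,
      Finer π π0 → Finer ρ π → Finer ω ρ → ∃ c', c' ≤ c ∧ CostReach G ρ c' := by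
  intro π c h
  induction h with
  | @stable π hst =>
    intro ρ hππ0 hρπ hωρ
    have hπω : Finer π ω := hcoarsest π hst hππ0
    have : ρ = π := by
      ext u v
      exact ⟨fun h => hρπ u v h, fun h => hωρ u v (hπω u v h)⟩
    exact ⟨0, le_refl 0, this ▸ CostReach.stable hst⟩
  | @step π π' R S c hop heff htail ih =>
    intro ρ hππ0 hρπ hωρ
    obtain ⟨hR, hS, hiff⟩ := hop
    have hSρ : Closed ρ S := fun a b h => hS a b (hρπ a b h)
    have hRρ : Closed ρ R := fun a b h => hR a b (hρπ a b h)
    set ρ' : Setoid V := ⟨fun a b => ρ.r a b ∧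
        (a ∈ S → ∀ w ∈ R, cellDeg G ρ a w = cellDeg G ρ b w),
      ⟨fun a => ⟨ρ.refl' a, fun _ _ _ => rfl⟩,
       fun {a b} h => ⟨ρ.symm' h.1,
         fun hb w hw => (h.2 ((hSρ a b h.1).2 hb) w hw).symm⟩,
       fun {a b c} h1 h2 => ⟨ρ.trans' h1.1 h2.1,
         fun ha w hw => (h1.2 ha w hw).trans (h2.2 ((hSρ a b h1.1).1 ha) w hw)⟩⟩⟩ with hρ'
    have hπ'π : Finer π' π := fun a b h => ((hiff a b).1 h).1
    have hπ'π0 : Finer π' π0 := fun a b h => hππ0 a b (hπ'π a b h)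
    have hρ'π' : Finer ρ' π' := by
      intro a b h
      refine (hiff a b).2 ⟨hρπ a b h.1, fun ha w hw => ?_⟩
      refine cellDeg_lift' G ρ π hρπ a b w ?_
      intro x hx
      exact h.2 ha x ((hR x w hx).2 hw)
    have hωρ' : Finer ω ρ' := by
      intro a b h
      refine ⟨hωρ a b h, fun _ w _ => ?_⟩
      exact cellDeg_lift' G ω ρ hωρ a b w (fun x _ => hωstable a b h x)
    obtain ⟨c', hc', hre⟩ := ih ρ' hπ'π0 hρ'π' hωρ'
    by_cases he : ρ' = ρ
    · exact ⟨c', le_trans hc' (Nat.le_add_left c _), he ▸ hre⟩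
    · have hop' : IsRefineOp G ρ R S ρ' := ⟨hRρ, hSρ, fun a b => Iff.rfl⟩
      exact ⟨opCost G R S + c', Nat.add_le_add_left hc' _, CostReach.step hop' he hre⟩

/-- If `ω = π_∞` is the coarsest stable partition refining `π` and
`ρ` satisfies `π ⪯ ρ ⪯ π_∞`, then `cost π ≥ cost ρ`. -/
theorem cost_mono {V : Type*} [Finite V] (G : SimpleGraph V) (π ρ ω : Setoid V)
    (hωstable : IsStable G ω) (hωπ : Finer ω π)
    (hcoarsest : ∀ σ : Setoid V, IsStable G σ → Finer σ π → Finer σ ω)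
    (hρπ : Finer ρ π) (hωρ : Finer ω ρ) :
    cost G ρ ≤ cost G π := by
  obtain ⟨c0, hc0⟩ := exists_reach G π
  have hne : {c : ℕ | CostReach G π c}.Nonempty := ⟨c0, hc0⟩
  have hmem : CostReach G π (cost G π) := Nat.sInf_mem hne
  obtain ⟨c', hc', hre⟩ := reach_mono G π ω hωstable hcoarsest hmem ρ
    (fun _ _ h => h) hρπ hωρ
  exact le_trans (Nat.sInf_le hre) hc'
end

section
/- Let G=(V,E) be a finite simple undirected graph and let π be an unstable partition of V. Then cost(π) = min over all effective elementary refining operations (R,S) applicable to π of cost(R,S) + cost(π(R,S)); that is, restricting the minimum in the definition of cost to elementary operations does not change its value. -/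
section Aux
set_option linter.deprecated false
variable {V : Type*} (G : SimpleGraph V) (π : Setoid V)

lemma closed_class (a : V) : Closed π {x | π.r x a} :=
  fun u v h => ⟨fun hu => π.trans (π.symm h) hu, fun hv => π.trans h hv⟩

lemma closed_mono {ρ : Setoid V} {S : Set V} (hf : Finer ρ π) (h : Closed π S) :
    Closed ρ S := fun u v huv => h u v (hf u v huv)

lemma closed_diff {A B : Set V} (hA : Closed π A) (hB : Closed π B) :
    Closed π (A \ B) := fun u v h =>
  ⟨fun hu => ⟨(hA u v h).mp hu.1, fun hb => hu.2 ((hB u v h).mpr hb)⟩,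
   fun hv => ⟨(hA u v h).mpr hv.1, fun hb => hv.2 ((hB u v h).mp hb)⟩⟩

/-- The refinement of `π` by the operation `(R,S)`. -/
def refineSetoid (R S : Set V) (hS : Closed π S) : Setoid V where
  r u v := π.r u v ∧ (u ∈ S → ∀ w ∈ R, cellDeg G π u w = cellDeg G π v w)
  iseqv := by
    refine ⟨fun a => ⟨π.refl a, fun _ _ _ => rfl⟩, ?_, ?_⟩
    · rintro a b ⟨hab, h⟩
      exact ⟨π.symm hab, fun hbS w hw => (h ((hS a b hab).mpr hbS) w hw).symm⟩
    · rintro a b c ⟨hab, h1⟩ ⟨hbc, h2⟩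
      exact ⟨π.trans hab hbc,
        fun haS w hw => (h1 haS w hw).trans (h2 ((hS a b hab).mp haS) w hw)⟩

lemma refineSetoid_rel {R S : Set V} (hS : Closed π S) (u v : V) :
    (refineSetoid G π R S hS).r u v ↔
      (π.r u v ∧ (u ∈ S → ∀ w ∈ R, cellDeg G π u w = cellDeg G π v w)) := Iff.rfl

lemma refineSetoid_finer {R S : Set V} (hS : Closed π S) :
    Finer (refineSetoid G π R S hS) π := fun _ _ h => h.1

lemma isRefineOp_refineSetoid {R S : Set V} (hR : Closed π R) (hS : Closed π S) :
    IsRefineOp G π R S (refineSetoid G π R S hS) :=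
  ⟨hR, hS, fun _ _ => Iff.rfl⟩

lemma finer_of_op {R S : Set V} {σ : Setoid V} (hop : IsRefineOp G π R S σ) :
    Finer σ π := fun u v h => ((hop.2.2 u v).1 h).1

/-- The key fiberwise-counting lemma: if `ρ` is finer than `π` and `u`, `v` have
equal `ρ`-cell-degrees on every `ρ`-cell inside the `π`-cell of `w`, then they have
equal `π`-cell-degree at `w`. -/
lemma fiber_lemma [Finite V] {ρ : Setoid V} (hf : Finer ρ π) {u v w : V}
    (h : ∀ w', π.r w' w → cellDeg G ρ u w' = cellDeg G ρ v w') :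
    cellDeg G π u w = cellDeg G π v w := by
  classical
  have : Fintype V := Fintype.ofFinite V
  have key : ∀ a : V,
      cellDeg G π a w = ∑ q : Quotient ρ,
        ((G.neighborSet a ∩ {x | π.r x w}).toFinset.filter
          (fun x => Quotient.mk ρ x = q)).card := by
    intro a
    rw [cellDeg, Set.ncard_eq_toFinset_card']
    exact Finset.card_eq_sum_card_fiberwise (fun x _ => Finset.mem_univ _)
  rw [key u, key v]
  refine Finset.sum_congr rfl (fun q _ => ?_)
  set w' := q.out with hw'
  by_cases hww : π.r w' w
  · have fib : ∀ a : V,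
        ((G.neighborSet a ∩ {x | π.r x w}).toFinset.filter
          (fun x => Quotient.mk ρ x = q)).card = cellDeg G ρ a w' := by
      intro a
      rw [cellDeg, Set.ncard_eq_toFinset_card']
      congr 1
      ext x
      simp only [Finset.mem_filter, Set.mem_toFinset, Set.mem_inter_iff, Set.mem_setOf_eq]
      constructor
      · rintro ⟨⟨hx1, _⟩, hx3⟩
        refine ⟨hx1, ?_⟩
        have : Quotient.mk ρ x = Quotient.mk ρ w' := by rw [hx3, hw']; exact (Quotient.out_eq q).symm
        exact Quotient.exact this
      · rintro ⟨hx1, hx2⟩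
        refine ⟨⟨hx1, π.trans (hf _ _ hx2) hww⟩, ?_⟩
        rw [show q = Quotient.mk ρ w' from (Quotient.out_eq q).symm]
        exact Quotient.sound hx2
    rw [fib u, fib v, h w' hww]
  · have fib : ∀ a : V,
        ((G.neighborSet a ∩ {x | π.r x w}).toFinset.filter
          (fun x => Quotient.mk ρ x = q)) = ∅ := by
      intro a
      rw [Finset.filter_eq_empty_iff]
      intro x hx
      simp only [Set.mem_toFinset, Set.mem_inter_iff, Set.mem_setOf_eq] at hx
      intro hmk
      have : ρ.r x w' := Quotient.exact (by rw [hmk, hw']; exact (Quotient.out_eq q).symm)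
      exact hww (π.trans (π.symm (hf _ _ this)) hx.2)
    rw [fib u, fib v]

end Aux

section Aux2
set_option linter.deprecated false
variable {V : Type*} [Finite V] (G : SimpleGraph V)

lemma stable_finer_cellDeg {τ ρ : Setoid V} (hτ : IsStable G τ) (hf : Finer τ ρ)
    {u v : V} (huv : τ.r u v) (w : V) : cellDeg G ρ u w = cellDeg G ρ v w :=
  fiber_lemma G ρ hf (fun w' _ => hτ u v huv w')

lemma stable_finer_refineOp {τ ρ ρ' : Setoid V} {R S : Set V} (hτ : IsStable G τ)
    (hf : Finer τ ρ) (hop : IsRefineOp G ρ R S ρ') : Finer τ ρ' := by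
  intro u v h
  rw [hop.2.2]
  exact ⟨hf u v h, fun _ w _ => stable_finer_cellDeg G hτ hf h w⟩

lemma refMono {ρ π σ ρ' : Setoid V} {R S : Set V} (hρπ : Finer ρ π)
    (hop : IsRefineOp G π R S σ) (hop' : IsRefineOp G ρ R S ρ') : Finer ρ' σ := by
  intro u v h
  rw [hop'.2.2] at h
  rw [hop.2.2]
  refine ⟨hρπ u v h.1, fun hS w hw => ?_⟩
  exact fiber_lemma G π hρπ
    (fun w' hw' => h.2 hS w' ((hop.1 w' w hw').mpr hw)) 

lemma setoid_eq_of_finer {ρ π : Setoid V} (h1 : Finer ρ π) (h2 : Finer π ρ) : ρ = π :=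
  Setoid.ext fun a b => ⟨h1 a b, h2 a b⟩

/-- Monotonicity lemma (Lemma M). -/
lemma lemmaM (τ : Setoid V) (hτ : IsStable G τ) {π : Setoid V} {c : ℕ}
    (h : CostReach G π c) :
    ∀ ρ : Setoid V, Finer τ ρ → Finer ρ π →
      (∀ μ, IsStable G μ → Finer μ π → Finer μ τ) →
      ∃ d ≤ c, CostReach G ρ d := by
  induction h with
  | @stable π hst =>
    intro ρ hτρ hρπ hco
    have hπτ : Finer π τ := hco π hst (fun _ _ h => h)
    have : ρ = π := setoid_eq_of_finer hρπ (fun a b h => hτρ a b (hπτ a b h))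
    exact ⟨0, le_refl 0, this ▸ CostReach.stable hst⟩
  | @step π σ R S c' hop heff htail ih =>
    intro ρ hτρ hρπ hco
    have hSρ : Closed ρ S := closed_mono π hρπ hop.2.1
    set ρ' := refineSetoid G ρ R S hSρ with hρ'
    have hop' : IsRefineOp G ρ R S ρ' :=
      isRefineOp_refineSetoid G ρ (closed_mono π hρπ hop.1) hSρ
    have hρ'σ : Finer ρ' σ := refMono G hρπ hop hop'
    have hcoσ : ∀ μ, IsStable G μ → Finer μ σ → Finer μ τ := fun μ hμ hμσ =>
      hco μ hμ (fun a b h => finer_of_op G π hop a b (hμσ a b h))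
    by_cases he : ρ' = ρ
    · obtain ⟨d, hd, hr⟩ := ih ρ hτρ (he ▸ hρ'σ) hcoσ
      exact ⟨d, le_trans hd (Nat.le_add_left _ _), hr⟩
    · obtain ⟨d, hd, hr⟩ := ih ρ' (stable_finer_refineOp G hτ hτρ hop') hρ'σ hcoσ
      exact ⟨opCost G R S + d, Nat.add_le_add_left hd _, CostReach.step hop' he hr⟩

/-- Every costed sequence ends in the coarsest stable refinement. -/
lemma endpoint {π : Setoid V} {c : ℕ} (h : CostReach G π c) :
    ∃ τ, IsStable G τ ∧ Finer τ π ∧ ∀ μ, IsStable G μ → Finer μ π → Finer μ τ := by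
  induction h with
  | @stable π hst => exact ⟨π, hst, fun _ _ h => h, fun μ _ h => h⟩
  | @step π σ R S c' hop heff htail ih =>
    obtain ⟨τ, h1, h2, h3⟩ := ih
    exact ⟨τ, h1, fun a b h => finer_of_op G π hop a b (h2 a b h),
      fun μ hμ hμπ => h3 μ hμ (stable_finer_refineOp G hμ hμπ hop)⟩

lemma costReach_of_op {ρ ρ' : Setoid V} {R S : Set V} {d : ℕ}
    (hop : IsRefineOp G ρ R S ρ') (h : CostReach G ρ' d) :
    ∃ e ≤ opCost G R S + d, CostReach G ρ e := by
  by_cases he : ρ' = ρ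
  · exact ⟨d, Nat.le_add_left _ _, he ▸ h⟩
  · exact ⟨_, le_refl _, CostReach.step hop he h⟩

lemma quotient_card_lt {ρ π : Setoid V} (hf : Finer ρ π) (hne : ρ ≠ π) :
    Nat.card (Quotient π) < Nat.card (Quotient ρ) := by
  classical
  have : Fintype V := Fintype.ofFinite V
  set f : Quotient ρ → Quotient π := Quotient.map' id (fun a b h => hf a b h) with hfdef
  have hsurj : Function.Surjective f := by
    intro q
    refine ⟨Quotient.mk ρ q.out, ?_⟩
    rw [hfdef]
    show Quotient.map' id _ (Quotient.mk'' q.out) = q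
    rw [Quotient.map'_mk'']
    exact Quotient.out_eq q
  have hle : Nat.card (Quotient π) ≤ Nat.card (Quotient ρ) :=
    Nat.card_le_card_of_surjective f hsurj
  rcases Nat.lt_or_ge (Nat.card (Quotient π)) (Nat.card (Quotient ρ)) with h | h
  · exact h
  · exfalso
    have : Fintype (Quotient ρ) := Fintype.ofFinite _
    have : Fintype (Quotient π) := Fintype.ofFinite _
    have hcard : Fintype.card (Quotient ρ) = Fintype.card (Quotient π) := by
      have := Nat.card_eq_fintype_card (α := Quotient ρ)
      have := Nat.card_eq_fintype_card (α := Quotient π)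
      omega
    have hbij : Function.Bijective f :=
      (Fintype.bijective_iff_surjective_and_card f).2 ⟨hsurj, hcard⟩
    apply hne
    refine setoid_eq_of_finer hf (fun a b h => ?_)
    have : f (Quotient.mk ρ a) = f (Quotient.mk ρ b) := by
      show Quotient.map' id _ (Quotient.mk'' a) = Quotient.map' id _ (Quotient.mk'' b)
      rw [Quotient.map'_mk'', Quotient.map'_mk'']
      exact Quotient.sound h
    exact Quotient.exact (hbij.1 this)

/-- An unstable partition admits an effective elementary refining operation. -/
lemma exists_elementary (π : Setoid V) (hu : ¬ IsStable G π) :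
    ∃ (R S : Set V) (π' : Setoid V), IsCell π R ∧ IsCell π S ∧
      IsRefineOp G π R S π' ∧ π' ≠ π := by
  simp only [IsStable, not_forall] at hu
  obtain ⟨u, v, huv, w, hdeg⟩ := hu
  set R := {x | π.r x w} with hR
  set S := {x | π.r x u} with hS
  set π' := refineSetoid G π R S (closed_class π u) with hπ'
  refine ⟨R, S, π', ⟨w, rfl⟩, ⟨u, rfl⟩,
    isRefineOp_refineSetoid G π (closed_class π w) (closed_class π u), ?_⟩
  intro he
  have : π'.r u v := he ▸ huv
  exact hdeg (this.2 (π.refl u) w (π.refl w))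

lemma exists_costReach (π : Setoid V) : ∃ c, CostReach G π c := by
  classical
  have hmain : ∀ (n : ℕ) (π : Setoid V), Nat.card V ≤ Nat.card (Quotient π) + n →
      ∃ c, CostReach G π c := by
    intro n
    induction n with
    | zero =>
      intro π hn
      refine ⟨0, CostReach.stable ?_⟩
      have : Fintype V := Fintype.ofFinite V
      have : Fintype (Quotient π) := Fintype.ofFinite _
      have hsurj : Function.Surjective (Quotient.mk π) := fun q => ⟨q.out, q.out_eq⟩
      have hle : Nat.card (Quotient π) ≤ Nat.card V :=
        Nat.card_le_card_of_surjective (Quotient.mk π) hsurj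
      have hcard : Fintype.card V = Fintype.card (Quotient π) := by
        have h1 := Nat.card_eq_fintype_card (α := Quotient π)
        have h2 := Nat.card_eq_fintype_card (α := V)
        omega
      have hbij : Function.Bijective (Quotient.mk π) :=
        (Fintype.bijective_iff_surjective_and_card _).2 ⟨hsurj, hcard⟩
      intro u v huv w
      have : u = v := hbij.1 (Quotient.sound huv)
      rw [this]
    | succ n ih =>
      intro π hn
      by_cases hst : IsStable G π
      · exact ⟨0, CostReach.stable hst⟩
      · obtain ⟨R, S, π', _, _, hop, hne⟩ := exists_elementary G π hst
        have hlt := quotient_card_lt (finer_of_op G π hop) hne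
        obtain ⟨c, hc⟩ := ih π' (by omega)
        exact ⟨_, CostReach.step hop hne hc⟩
  exact hmain (Nat.card V) π (Nat.le_add_left _ _)

end Aux2

section Aux3
set_option linter.deprecated false
variable {V : Type*} [Finite V] (G : SimpleGraph V)

lemma opCost_add_right {R S₀ S : Set V} (h : S₀ ⊆ S) :
    opCost G R S₀ + opCost G R (S \ S₀) = opCost G R S := by
  have hd : Disjoint {p : V × V | G.Adj p.1 p.2 ∧ p.1 ∈ R ∧ p.2 ∈ S₀}
      {p : V × V | G.Adj p.1 p.2 ∧ p.1 ∈ R ∧ p.2 ∈ S \ S₀} := by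
    rw [Set.disjoint_left]
    rintro ⟨x, y⟩ hp hq
    exact hq.2.2.2 hp.2.2
  have hu : {p : V × V | G.Adj p.1 p.2 ∧ p.1 ∈ R ∧ p.2 ∈ S₀} ∪
      {p : V × V | G.Adj p.1 p.2 ∧ p.1 ∈ R ∧ p.2 ∈ S \ S₀} =
      {p : V × V | G.Adj p.1 p.2 ∧ p.1 ∈ R ∧ p.2 ∈ S} := by
    ext ⟨x, y⟩
    simp only [Set.mem_union, Set.mem_setOf_eq, Set.mem_diff]
    have h' : y ∈ S₀ → y ∈ S := fun hy => h hy
    by_cases hy : y ∈ S₀ <;> tauto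
  rw [opCost, opCost, opCost, ← hu, Set.ncard_union_eq hd (Set.toFinite _) (Set.toFinite _)]

lemma opCost_add_left {R₀ R S : Set V} (h : R₀ ⊆ R) :
    opCost G R₀ S + opCost G (R \ R₀) S = opCost G R S := by
  have hd : Disjoint {p : V × V | G.Adj p.1 p.2 ∧ p.1 ∈ R₀ ∧ p.2 ∈ S}
      {p : V × V | G.Adj p.1 p.2 ∧ p.1 ∈ R \ R₀ ∧ p.2 ∈ S} := by
    rw [Set.disjoint_left]
    rintro ⟨x, y⟩ hp hq
    exact hq.2.1.2 hp.2.1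
  have hu : {p : V × V | G.Adj p.1 p.2 ∧ p.1 ∈ R₀ ∧ p.2 ∈ S} ∪
      {p : V × V | G.Adj p.1 p.2 ∧ p.1 ∈ R \ R₀ ∧ p.2 ∈ S} =
      {p : V × V | G.Adj p.1 p.2 ∧ p.1 ∈ R ∧ p.2 ∈ S} := by
    ext ⟨x, y⟩
    simp only [Set.mem_union, Set.mem_setOf_eq, Set.mem_diff]
    have h' : x ∈ R₀ → x ∈ R := fun hx => h hx
    by_cases hx : x ∈ R₀ <;> tauto
  rw [opCost, opCost, opCost, ← hu, Set.ncard_union_eq hd (Set.toFinite _) (Set.toFinite _)]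

end Aux3


set_option linter.deprecated false in
/-- For an unstable partition `π`, the cost of `π` equals the minimum,
over all effective *elementary* refining operations `(R,S)` applicable to `π` (i.e. with
`R` and `S` cells of `π`), of `cost(R,S) + cost(π(R,S))`. -/
theorem cost_elementary {V : Type*} [Finite V] (G : SimpleGraph V) (π : Setoid V)
    (hunstable : ¬ IsStable G π) :
    cost G π = sInf {c : ℕ | ∃ (R S : Set V) (π' : Setoid V),
      IsCell π R ∧ IsCell π S ∧ IsRefineOp G π R S π' ∧ π' ≠ π ∧
      c = opCost G R S + cost G π'} := by
  classical
  have hex : ∀ σ : Setoid V, ∃ c, CostReach G σ c := exists_costReach G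
  obtain ⟨R₁, S₁, π₁', hc1, hc2, hop1, hne1⟩ := exists_elementary G π hunstable
  have hRHSne : {c : ℕ | ∃ (R S : Set V) (π' : Setoid V),
      IsCell π R ∧ IsCell π S ∧ IsRefineOp G π R S π' ∧ π' ≠ π ∧
      c = opCost G R S + cost G π'}.Nonempty :=
    ⟨_, R₁, S₁, π₁', hc1, hc2, hop1, hne1, rfl⟩
  refine le_antisymm (le_csInf hRHSne ?_) ?_
  · rintro b ⟨R, S, π', _, _, hop, hne, rfl⟩
    exact Nat.sInf_le (CostReach.step hop hne (Nat.sInf_mem (hex π')))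
  · have hmem : CostReach G π (cost G π) := Nat.sInf_mem (hex π)
    obtain ⟨τ, hτst, hτπ, hco⟩ := endpoint G hmem
    generalize hc : cost G π = m at hmem ⊢
    cases hmem with
    | stable hst => exact absurd hst hunstable
    | @step _ σ R S c' hop hne htail =>
      -- extract a split witness
      have hwit : ∃ p q, π.r p q ∧ ¬ σ.r p q := by
        by_contra h
        push_neg at h
        exact hne (setoid_eq_of_finer (finer_of_op G π hop) h)
      obtain ⟨p, q, hpq, hnpq⟩ := hwit
      have hB : ¬ (p ∈ S → ∀ w ∈ R, cellDeg G π p w = cellDeg G π q w) :=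
        fun hb => hnpq ((hop.2.2 p q).2 ⟨hpq, hb⟩)
      push_neg at hB
      obtain ⟨hpS, w0, hw0R, hdeg⟩ := hB
      set S₀ : Set V := {x | π.r x p} with hS₀def
      set R₀ : Set V := {x | π.r x w0} with hR₀def
      have hS₀S : S₀ ⊆ S := fun x hx => (hop.2.1 x p hx).mpr hpS
      have hR₀R : R₀ ⊆ R := fun x hx => (hop.1 x w0 hx).mpr hw0R
      have hclS₀ : Closed π S₀ := closed_class π p
      have hclR₀ : Closed π R₀ := closed_class π w0
      set π₀ := refineSetoid G π R₀ S₀ hclS₀ with hπ₀def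
      have hop₀ : IsRefineOp G π R₀ S₀ π₀ := isRefineOp_refineSetoid G π hclR₀ hclS₀
      have hfin₀ : Finer π₀ π := refineSetoid_finer G π hclS₀
      have hne₀ : π₀ ≠ π := by
        intro he
        have hrel : π₀.r p q := by rw [he]; exact hpq
        exact hdeg (hrel.2 (π.refl p) w0 (π.refl w0))
      have hclS_0 : Closed π₀ S := closed_mono π hfin₀ hop.2.1
      have hclS₀_0 : Closed π₀ S₀ := closed_mono π hfin₀ hclS₀
      have hclR₀_0 : Closed π₀ R₀ := closed_mono π hfin₀ hclR₀
      have hclSdiff : Closed π₀ (S \ S₀) := closed_diff π₀ hclS_0 hclS₀_0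
      set π₁ := refineSetoid G π₀ R₀ (S \ S₀) hclSdiff with hπ₁def
      have hop₁ : IsRefineOp G π₀ R₀ (S \ S₀) π₁ :=
        isRefineOp_refineSetoid G π₀ hclR₀_0 hclSdiff
      have hfin₁ : Finer π₁ π₀ := refineSetoid_finer G π₀ hclSdiff
      have hfin₁π : Finer π₁ π := fun a b h => hfin₀ a b (hfin₁ a b h)
      have hclS_1 : Closed π₁ S := closed_mono π₀ hfin₁ hclS_0
      have hclRdiff : Closed π₁ (R \ R₀) :=
        closed_mono π hfin₁π (closed_diff π hop.1 hclR₀)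
      set π₂ := refineSetoid G π₁ (R \ R₀) S hclS_1 with hπ₂def
      have hop₂ : IsRefineOp G π₁ (R \ R₀) S π₂ :=
        isRefineOp_refineSetoid G π₁ hclRdiff hclS_1
      have hτπ₀ : Finer τ π₀ := stable_finer_refineOp G hτst hτπ hop₀
      have hτπ₁ : Finer τ π₁ := stable_finer_refineOp G hτst hτπ₀ hop₁
      have hτπ₂ : Finer τ π₂ := stable_finer_refineOp G hτst hτπ₁ hop₂
      -- π₂ is finer than σ
      have hπ₂σ : Finer π₂ σ := by
        intro a b hab
        obtain ⟨h1ab, hcond2⟩ := (refineSetoid_rel G π₁ (R := R \ R₀) hclS_1 a b).1 hab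
        obtain ⟨h0ab, hcond1⟩ := (refineSetoid_rel G π₀ (R := R₀) hclSdiff a b).1 h1ab
        obtain ⟨hπab, hcond0⟩ := (refineSetoid_rel G π (R := R₀) hclS₀ a b).1 h0ab
        rw [hop.2.2]
        refine ⟨hπab, fun haS w hwR => ?_⟩
        by_cases hw0 : w ∈ R₀
        · by_cases haS₀ : a ∈ S₀
          · exact hcond0 haS₀ w hw0
          · exact fiber_lemma G π hfin₀
              (fun w' hw' => hcond1 ⟨haS, haS₀⟩ w' (π.trans hw' hw0))
        · exact fiber_lemma G π hfin₁π
            (fun w' hw' => hcond2 haS w'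
              ⟨(hop.1 w' w hw').mpr hwR,
                fun hw'R₀ => hw0 (π.trans (π.symm hw') hw'R₀)⟩)
      have hcoσ : ∀ μ, IsStable G μ → Finer μ σ → Finer μ τ := fun μ h1 h2 =>
        hco μ h1 (fun a b h => finer_of_op G π hop a b (h2 a b h))
      obtain ⟨d, hd, hr2⟩ := lemmaM G τ hτst htail π₂ hτπ₂ hπ₂σ hcoσ
      obtain ⟨e2, he2, hr1⟩ := costReach_of_op G hop₂ hr2
      obtain ⟨e1, he1, hr0⟩ := costReach_of_op G hop₁ hr1
      have hcπ₀ : cost G π₀ ≤ e1 := Nat.sInf_le hr0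
      have hmemRHS : sInf {c : ℕ | ∃ (R S : Set V) (π' : Setoid V),
          IsCell π R ∧ IsCell π S ∧ IsRefineOp G π R S π' ∧ π' ≠ π ∧
          c = opCost G R S + cost G π'} ≤ opCost G R₀ S₀ + cost G π₀ :=
        Nat.sInf_le ⟨R₀, S₀, π₀, ⟨w0, hR₀def⟩, ⟨p, hS₀def⟩, hop₀, hne₀, rfl⟩
      have heq1 : opCost G R₀ S₀ + opCost G R₀ (S \ S₀) = opCost G R₀ S :=
        opCost_add_right G hS₀S
      have heq2 : opCost G R₀ S + opCost G (R \ R₀) S = opCost G R S :=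
        opCost_add_left G hR₀R
      omega
end

section
/- Let ℓ ≥ 1 and let G be the AND_ℓ-gadget with in-terminals B = {b₀,…,b_{2^ℓ−1}} and out-terminals a₀, a₁. Let ψ be a partition of B into binary blocks, and let ρ be the coarsest stable partition of V(G) that refines ψ (i.e. refines ψ ∪ {V(G)∖B}). Then ρ agrees with ψ on B (the partition induced by ρ on B equals ψ); furthermore, ρ distinguishes a₀ from a₁ (puts them in different cells) if and only if ψ distinguishes all in-terminal pairs, i.e. b_{2p} and b_{2p+1} lie in different cells of ψ for every 0 ≤ p < 2^{ℓ−1}. -/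
/-- The vertex type of the gadget `AND_ℓ`.  For `ℓ ∈ {0,1}` it is `Fin 4`
(`a₀ = 0`, `a₁ = 1`, `b₀ = 2`, `b₁ = 3`), for `ℓ = 2` it is `Fin 10`
(`a₀ = 0`, `a₁ = 1`, `b₀,…,b₃ = 2,…,5`, `c₀,…,c₃ = 6,…,9`) and for `ℓ ≥ 3` it is
the disjoint union of a copy of `AND₂` and two copies of `AND_{ℓ-1}`. -/
def ANDVert : ℕ → Type
  | 0 => Fin 4
  | 1 => Fin 4
  | 2 => Fin 10
  | (n + 3) => Fin 10 ⊕ (ANDVert (n + 2) ⊕ ANDVert (n + 2))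

/-- The out-terminal `a₀` of `AND_ℓ`. -/
def ANDa0 : (ℓ : ℕ) → ANDVert ℓ
  | 0 => (0 : Fin 4)
  | 1 => (0 : Fin 4)
  | 2 => (0 : Fin 10)
  | (_ + 3) => Sum.inl (0 : Fin 10)

/-- The out-terminal `a₁` of `AND_ℓ`. -/
def ANDa1 : (ℓ : ℕ) → ANDVert ℓ
  | 0 => (1 : Fin 4)
  | 1 => (1 : Fin 4)
  | 2 => (1 : Fin 10)
  | (_ + 3) => Sum.inl (1 : Fin 10)

/-- The in-terminal `b_i` of `AND_ℓ` (only the values `i < 2^ℓ` are meaningful);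
for `ℓ ≥ 3` the in-terminal sequence is the concatenation of the in-terminal
sequences of the two sub-gadgets. -/
def ANDb : (ℓ : ℕ) → ℕ → ANDVert ℓ
  | 0, _ => (2 : Fin 4)
  | 1, i => if i = 0 then (2 : Fin 4) else (3 : Fin 4)
  | 2, i => (match i with | 0 => 2 | 1 => 3 | 2 => 4 | _ => 5 : Fin 10)
  | (n + 3), i =>
      if i < 2 ^ (n + 2) then Sum.inr (Sum.inl (ANDb (n + 2) i))
      else Sum.inr (Sum.inr (ANDb (n + 2) (i - 2 ^ (n + 2))))

/-- The edges of the gadget `AND₂` (the Cai–Fürer–Immerman gadget):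
`a₀c₀, a₀c₁, a₁c₂, a₁c₃, b₀c₀, b₀c₂, b₁c₁, b₁c₃, b₂c₁, b₂c₂, b₃c₀, b₃c₃`. -/
def AND2rel (u v : Fin 10) : Prop :=
  (u, v) ∈ ([(0, 6), (0, 7), (1, 8), (1, 9), (2, 6), (2, 8), (3, 7), (3, 9),
             (4, 7), (4, 8), (5, 6), (5, 9)] : List (Fin 10 × Fin 10))

/-- The edge relation of the gadget `AND_ℓ`: for `ℓ = 1` the edges `a₀b₀, a₁b₁`; for
`ℓ = 2` the CFI gadget; for `ℓ ≥ 3` the edges inside the three sub-gadgets together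
with the four edges joining the in-terminal pairs `(b₀,b₁)` resp. `(b₂,b₃)` of the top
copy of `AND₂` to the out-terminals of the two copies of `AND_{ℓ-1}`. -/
def ANDrel : (ℓ : ℕ) → ANDVert ℓ → ANDVert ℓ → Prop
  | 0 => fun _ _ => False
  | 1 => fun u v => (u = (0 : Fin 4) ∧ v = (2 : Fin 4)) ∨ (u = (1 : Fin 4) ∧ v = (3 : Fin 4))
  | 2 => AND2rel
  | (n + 3) => fun u v =>
      match u, v with
      | Sum.inl x, Sum.inl y => AND2rel x y
      | Sum.inr (Sum.inl x), Sum.inr (Sum.inl y) => ANDrel (n + 2) x y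
      | Sum.inr (Sum.inr x), Sum.inr (Sum.inr y) => ANDrel (n + 2) x y
      | Sum.inl x, Sum.inr (Sum.inl y) =>
          (x = 2 ∧ y = ANDa0 (n + 2)) ∨ (x = 3 ∧ y = ANDa1 (n + 2))
      | Sum.inl x, Sum.inr (Sum.inr y) =>
          (x = 4 ∧ y = ANDa0 (n + 2)) ∨ (x = 5 ∧ y = ANDa1 (n + 2))
      | _, _ => False

/-- The gadget `AND_ℓ` as a simple graph. -/
def ANDgraph (ℓ : ℕ) : SimpleGraph (ANDVert ℓ) := SimpleGraph.fromRel (ANDrel ℓ)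

/-- The set of in-terminals of `AND_ℓ`. -/
def ANDins (ℓ : ℕ) : Set (ANDVert ℓ) := ANDb ℓ '' Set.Iio (2 ^ ℓ)

/-- The binary block of in-terminals `{b_i : q·2^(ℓ-j) ≤ i < (q+1)·2^(ℓ-j)}`. -/
def binBlock (ℓ j q : ℕ) : Set (ANDVert ℓ) :=
  ANDb ℓ '' Set.Ico (q * 2 ^ (ℓ - j)) ((q + 1) * 2 ^ (ℓ - j))

/-- `ψ` is a partition of the set of in-terminals of `AND_ℓ` into binary blocks. -/
def IsBinBlockPartition (ℓ : ℕ) (ψ : Set (Set (ANDVert ℓ))) : Prop :=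
  (∀ C ∈ ψ, ∃ j ≤ ℓ, ∃ q < 2 ^ j, C = binBlock ℓ j q) ∧
  ⋃₀ ψ = ANDins ℓ ∧ ψ.PairwiseDisjoint id

/-- The partition `ρ` of `V` refines the partition `ψ` of a subset of `V`
(that is, it refines `ψ ∪ {V ∖ ⋃₀ ψ}`). -/
def RefinesCells {V : Type*} (ρ : Setoid V) (ψ : Set (Set V)) : Prop :=
  ∀ u v, ρ.r u v → (∃ C ∈ ψ, u ∈ C ∧ v ∈ C) ∨ (u ∉ ⋃₀ ψ ∧ v ∉ ⋃₀ ψ)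

/-- The partition induced by `ρ` on `⋃₀ ψ` equals `ψ`. -/
def AgreesWith {V : Type*} (ρ : Setoid V) (ψ : Set (Set V)) : Prop :=
  ∀ u ∈ ⋃₀ ψ, ∀ v ∈ ⋃₀ ψ, (ρ.r u v ↔ ∃ C ∈ ψ, u ∈ C ∧ v ∈ C)

/-- `ρ` is the coarsest stable partition (for `G`) refining the partition `ψ`
of a subset of the vertex set. -/
def IsCoarsestStableRefining {V : Type*} (G : SimpleGraph V) (ψ : Set (Set V))
    (ρ : Setoid V) : Prop :=
  IsStable G ρ ∧ RefinesCells ρ ψ ∧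
    ∀ σ : Setoid V, IsStable G σ → RefinesCells σ ψ → Finer σ ρ

attribute [reducible] ANDVert

/-- `w` is in a singleton cell of `ρ`. -/
def Sing {W : Type*} (ρ : Setoid W) (w : W) : Prop := ∀ u, ρ.r u w → u = w

lemma cell_eq_sing {W : Type*} {ρ : Setoid W} {s : W} (hs : Sing ρ s) :
    {x | ρ.r x s} = {s} := by
  ext x; constructor
  · exact fun h => hs x h
  · rintro rfl; exact ρ.refl _

lemma cellDeg_sing_one {W : Type*} {H : SimpleGraph W} {ρ : Setoid W} {s u : W}
    (hs : Sing ρ s) (h : H.Adj u s) : cellDeg H ρ u s = 1 := by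
  unfold cellDeg
  rw [cell_eq_sing hs]
  have : H.neighborSet u ∩ {s} = {s} := by
    ext z; simp only [Set.mem_inter_iff, Set.mem_singleton_iff, SimpleGraph.mem_neighborSet]
    constructor
    · exact fun hz => hz.2
    · rintro rfl; exact ⟨h, rfl⟩
  rw [this, Set.ncard_singleton]

lemma cellDeg_sing_zero {W : Type*} {H : SimpleGraph W} {ρ : Setoid W} {s u : W}
    (hs : Sing ρ s) (h : ¬ H.Adj u s) : cellDeg H ρ u s = 0 := by
  unfold cellDeg
  rw [cell_eq_sing hs]
  have : H.neighborSet u ∩ {s} = ∅ := by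
    ext z; simp only [Set.mem_inter_iff, Set.mem_singleton_iff, SimpleGraph.mem_neighborSet,
      Set.mem_empty_iff_false, iff_false, not_and]
    rintro hz rfl; exact h hz
  rw [this, Set.ncard_empty]

lemma adj_of_sing_deg {W : Type*} {H : SimpleGraph W} {ρ : Setoid W} {s u y : W}
    (hst : IsStable H ρ) (hs : Sing ρ s) (hy : H.Adj y s) (hu : ρ.r u y) : H.Adj u s := by
  by_contra h
  have h1 := hst u y hu s
  rw [cellDeg_sing_zero hs h, cellDeg_sing_one hs hy] at h1
  exact one_ne_zero h1.symm

lemma step1 {W : Type*} {H : SimpleGraph W} {ρ : Setoid W} (hst : IsStable H ρ) {s y : W}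
    (hs : Sing ρ s) (hy : H.Adj y s)
    (hn : ∀ u, H.Adj u s → u = y ∨ (u ≠ y ∧ Sing ρ u)) : Sing ρ y := by
  intro u hu
  rcases hn u (adj_of_sing_deg hst hs hy hu) with h | ⟨hne, hsu⟩
  · exact h
  · exact absurd (hsu y (ρ.symm hu)).symm hne

lemma step2 {W : Type*} {H : SimpleGraph W} {ρ : Setoid W} (hst : IsStable H ρ) {s s' y : W}
    (hs : Sing ρ s) (hs' : Sing ρ s') (hy : H.Adj y s) (hy' : ¬ H.Adj y s')
    (hn : ∀ u, H.Adj u s → u = y ∨ H.Adj u s' ∨ (u ≠ y ∧ Sing ρ u)) : Sing ρ y := by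
  intro u hu
  rcases hn u (adj_of_sing_deg hst hs hy hu) with h | h | ⟨hne, hsu⟩
  · exact h
  · exfalso
    have h1 := hst u y hu s'
    rw [cellDeg_sing_one hs' h, cellDeg_sing_zero hs' hy'] at h1
    exact one_ne_zero h1
  · exact absurd (hsu y (ρ.symm hu)).symm hne

/-- The orbit setoid of an involution. -/
def orbSetoid {V : Type*} (φ : V → V) (hinv : ∀ x, φ (φ x) = x) : Setoid V :=
  ⟨fun x y => y = x ∨ y = φ x, by
    constructor
    · exact fun x => Or.inl rfl
    · rintro x y (rfl | rfl)
      · exact Or.inl rfl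
      · exact Or.inr (hinv x).symm
    · rintro x y z h1 h2
      rcases h1 with rfl | rfl
      · exact h2
      · rcases h2 with rfl | rfl
        · exact Or.inr rfl
        · exact Or.inl (hinv x)⟩

lemma orbSetoid_rel {V : Type*} (φ : V → V) (hinv : ∀ x, φ (φ x) = x) (x y : V) :
    (orbSetoid φ hinv).r x y ↔ (y = x ∨ y = φ x) := Iff.rfl

lemma orb_stable {V : Type*} (G : SimpleGraph V) (φ : V → V) (hinv : ∀ x, φ (φ x) = x)
    (hadj : ∀ x y, G.Adj (φ x) (φ y) ↔ G.Adj x y) : IsStable G (orbSetoid φ hinv) := by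
  have hinj : Function.Injective φ := Function.LeftInverse.injective hinv
  intro u v huv w
  rcases huv with rfl | rfl
  · rfl
  · unfold cellDeg
    have hcell : {x | (orbSetoid φ hinv).r x w} = {w, φ w} := by
      ext x
      simp only [Set.mem_setOf_eq, orbSetoid_rel, Set.mem_insert_iff, Set.mem_singleton_iff]
      constructor
      · rintro (h | h)
        · exact Or.inl h.symm
        · refine Or.inr ?_
          rw [h, hinv]
      · rintro (rfl | rfl)
        · exact Or.inl rfl
        · exact Or.inr (hinv w).symm
    rw [hcell]
    have himg : G.neighborSet (φ u) ∩ {w, φ w} = φ '' (G.neighborSet u ∩ {w, φ w}) := by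
      ext z
      simp only [Set.mem_inter_iff, SimpleGraph.mem_neighborSet, Set.mem_insert_iff,
        Set.mem_singleton_iff, Set.mem_image]
      constructor
      · rintro ⟨ha, hz⟩
        refine ⟨φ z, ⟨?_, ?_⟩, hinv z⟩
        · have : G.Adj (φ u) (φ (φ z)) := by rw [hinv]; exact ha
          exact (hadj _ _).mp this
        · rcases hz with rfl | rfl
          · exact Or.inr rfl
          · exact Or.inl (hinv w)
      · rintro ⟨t, ⟨ha, ht⟩, rfl⟩
        refine ⟨(hadj _ _).mpr ha, ?_⟩
        rcases ht with rfl | rfl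
        · exact Or.inr rfl
        · exact Or.inl (hinv w)
    rw [himg, Set.ncard_image_of_injective _ hinj]

/-! ### Basic facts about the gadget -/

instance : DecidableRel AND2rel := fun u v => by unfold AND2rel; infer_instance

instance ANDVert.decEq : (ℓ : ℕ) → DecidableEq (ANDVert ℓ)
  | 0 => inferInstanceAs (DecidableEq (Fin 4))
  | 1 => inferInstanceAs (DecidableEq (Fin 4))
  | 2 => inferInstanceAs (DecidableEq (Fin 10))
  | (n+3) =>
      letI := ANDVert.decEq (n+2)
      inferInstanceAs (DecidableEq (Fin 10 ⊕ (ANDVert (n+2) ⊕ ANDVert (n+2))))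

instance ANDrel.dec : (ℓ : ℕ) → DecidableRel (ANDrel ℓ)
  | 0 => fun _ _ => inferInstanceAs (Decidable False)
  | 1 => fun u v =>
      inferInstanceAs (Decidable (((show Fin 4 from u) = 0 ∧ (show Fin 4 from v) = 2) ∨
        ((show Fin 4 from u) = 1 ∧ (show Fin 4 from v) = 3)))
  | 2 => fun u v => inferInstanceAs (Decidable (AND2rel u v))
  | (n+3) => fun u v =>
      letI := ANDrel.dec (n+2)
      letI := ANDVert.decEq (n+2)
      match u, v with
      | Sum.inl x, Sum.inl y => inferInstanceAs (Decidable (AND2rel x y))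
      | Sum.inr (Sum.inl x), Sum.inr (Sum.inl y) => inferInstanceAs (Decidable (ANDrel (n+2) x y))
      | Sum.inr (Sum.inr x), Sum.inr (Sum.inr y) => inferInstanceAs (Decidable (ANDrel (n+2) x y))
      | Sum.inl x, Sum.inr (Sum.inl y) =>
          inferInstanceAs (Decidable ((x = 2 ∧ y = ANDa0 (n+2)) ∨ (x = 3 ∧ y = ANDa1 (n+2))))
      | Sum.inl x, Sum.inr (Sum.inr y) =>
          inferInstanceAs (Decidable ((x = 4 ∧ y = ANDa0 (n+2)) ∨ (x = 5 ∧ y = ANDa1 (n+2))))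
      | Sum.inr (Sum.inl _), Sum.inl _ => inferInstanceAs (Decidable False)
      | Sum.inr (Sum.inr _), Sum.inl _ => inferInstanceAs (Decidable False)
      | Sum.inr (Sum.inl _), Sum.inr (Sum.inr _) => inferInstanceAs (Decidable False)
      | Sum.inr (Sum.inr _), Sum.inr (Sum.inl _) => inferInstanceAs (Decidable False)

lemma ANDgraph_adj (ℓ : ℕ) (x y : ANDVert ℓ) :
    (ANDgraph ℓ).Adj x y ↔ x ≠ y ∧ (ANDrel ℓ x y ∨ ANDrel ℓ y x) :=
  SimpleGraph.fromRel_adj _ x y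

instance ANDgraph.adjdec (ℓ : ℕ) : DecidableRel (ANDgraph ℓ).Adj := fun u v =>
  decidable_of_iff _ (ANDgraph_adj ℓ u v).symm

lemma ANDa0_ne_a1 : ∀ ℓ, ANDa0 ℓ ≠ ANDa1 ℓ
  | 0 => by exact (by decide : (0 : Fin 4) ≠ 1)
  | 1 => by exact (by decide : (0 : Fin 4) ≠ 1)
  | 2 => by exact (by decide : (0 : Fin 10) ≠ 1)
  | (n+3) => fun h => absurd (Sum.inl.inj h) (by exact (by decide : (0:Fin 10) ≠ 1))

/-- symmetrized edge relation -/
def Rl (ℓ : ℕ) (x y : ANDVert ℓ) : Prop := ANDrel ℓ x y ∨ ANDrel ℓ y x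

instance Rl.dec (ℓ : ℕ) : DecidableRel (Rl ℓ) := fun u v => by unfold Rl; infer_instance

lemma ANDgraph_adj' (ℓ : ℕ) (x y : ANDVert ℓ) :
    (ANDgraph ℓ).Adj x y ↔ x ≠ y ∧ Rl ℓ x y := ANDgraph_adj ℓ x y

lemma Rl_ll (n : ℕ) (x y : Fin 10) :
    Rl (n+3) (Sum.inl x) (Sum.inl y) ↔ Rl 2 x y := Iff.rfl

lemma Rl_rlrl (n : ℕ) (x y : ANDVert (n+2)) :
    Rl (n+3) (Sum.inr (Sum.inl x)) (Sum.inr (Sum.inl y)) ↔ Rl (n+2) x y := Iff.rfl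

lemma Rl_rrrr (n : ℕ) (x y : ANDVert (n+2)) :
    Rl (n+3) (Sum.inr (Sum.inr x)) (Sum.inr (Sum.inr y)) ↔ Rl (n+2) x y := Iff.rfl

lemma Rl_lrl (n : ℕ) (x : Fin 10) (y : ANDVert (n+2)) :
    Rl (n+3) (Sum.inl x) (Sum.inr (Sum.inl y)) ↔
      ((x = 2 ∧ y = ANDa0 (n+2)) ∨ (x = 3 ∧ y = ANDa1 (n+2))) := by
  show _ ∨ False ↔ _
  rw [or_false]
  rfl

lemma Rl_lrr (n : ℕ) (x : Fin 10) (y : ANDVert (n+2)) :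
    Rl (n+3) (Sum.inl x) (Sum.inr (Sum.inr y)) ↔
      ((x = 4 ∧ y = ANDa0 (n+2)) ∨ (x = 5 ∧ y = ANDa1 (n+2))) := by
  show _ ∨ False ↔ _
  rw [or_false]
  rfl

lemma Rl_symm {ℓ : ℕ} {x y : ANDVert ℓ} (h : Rl ℓ x y) : Rl ℓ y x := h.symm

lemma Rl_symm_iff (ℓ : ℕ) (x y : ANDVert ℓ) : Rl ℓ x y ↔ Rl ℓ y x := ⟨Rl_symm, Rl_symm⟩

lemma Rl_rlrr (n : ℕ) (x y : ANDVert (n+2)) :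
    Rl (n+3) (Sum.inr (Sum.inl x)) (Sum.inr (Sum.inr y)) ↔ False :=
  ⟨fun h => h.elim id id, False.elim⟩

/-! ### The swap automorphisms -/

def flip1 : Fin 10 → Fin 10 := ![1,0,3,2,4,5,9,8,7,6]
def flip2 : Fin 10 → Fin 10 := ![1,0,2,3,5,4,8,9,6,7]
def swapP : Fin 10 → Fin 10 := ![0,1,4,5,2,3,7,6,8,9]
def sw4 : Fin 4 → Fin 4 := ![1,0,3,2]

def Psi : (ℓ j q : ℕ) → ANDVert ℓ → ANDVert ℓ
  | 1, 0, _ => sw4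
  | 2, 0, _ => swapP
  | 2, _+1, q => if q = 0 then flip1 else flip2
  | (n+3), 0, _ => Sum.map swapP Sum.swap
  | (n+3), (j+1), q =>
      if q < 2 ^ j then
        Sum.map (if j = n + 1 then flip1 else id) (Sum.map (Psi (n+2) j q) id)
      else
        Sum.map (if j = n + 1 then flip2 else id) (Sum.map id (Psi (n+2) j (q - 2^j)))
  | _, _, _ => id

lemma Psi_two_succ (j q : ℕ) : Psi 2 (j+1) q = if q = 0 then flip1 else flip2 := rfl

lemma Psi_succ_succ (n j q : ℕ) :
    Psi (n+3) (j+1) q =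
      if q < 2 ^ j then
        Sum.map (if j = n + 1 then flip1 else id) (Sum.map (Psi (n+2) j q) id)
      else
        Sum.map (if j = n + 1 then flip2 else id) (Sum.map id (Psi (n+2) j (q - 2^j))) := rfl

lemma Psi_top (n q : ℕ) : Psi (n+3) 0 q = Sum.map swapP Sum.swap := rfl

lemma sw4_invol : ∀ x, sw4 (sw4 x) = x := by decide
lemma swapP_invol : ∀ x, swapP (swapP x) = x := by decide
lemma flip1_invol : ∀ x, flip1 (flip1 x) = x := by decide
lemma flip2_invol : ∀ x, flip2 (flip2 x) = x := by decide

lemma Psi_inv : ∀ ℓ j q, ∀ x, Psi ℓ j q (Psi ℓ j q x) = x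
  | 0, j, q => fun x => rfl
  | 1, 0, q => fun x => sw4_invol x
  | 1, (j+1), q => fun x => rfl
  | 2, 0, q => fun x => swapP_invol x
  | 2, (j+1), q => fun x => by
      rw [Psi_two_succ]
      by_cases h : q = 0
      · rw [if_pos h]; exact flip1_invol x
      · rw [if_neg h]; exact flip2_invol x
  | (n+3), 0, q => fun x => by
      rw [Psi_top]
      rcases x with x | x | x
      · show Sum.inl (swapP (swapP x)) = Sum.inl x
        rw [swapP_invol]
      · rfl
      · rfl
  | (n+3), (j+1), q => fun x => by
      rw [Psi_succ_succ]
      by_cases h : q < 2 ^ j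
      · rw [if_pos h]
        rcases x with x | x | x
        · show Sum.inl ((if j = n + 1 then flip1 else id) ((if j = n + 1 then flip1 else id) x))
            = Sum.inl x
          by_cases hj : j = n + 1 <;> simp [hj, flip1_invol x]
        · show Sum.inr (Sum.inl (Psi (n+2) j q (Psi (n+2) j q x))) = Sum.inr (Sum.inl x)
          rw [Psi_inv (n+2) j q x]
        · rfl
      · rw [if_neg h]
        rcases x with x | x | x
        · show Sum.inl ((if j = n + 1 then flip2 else id) ((if j = n + 1 then flip2 else id) x))
            = Sum.inl x
          by_cases hj : j = n + 1 <;> simp [hj, flip2_invol x]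
        · rfl
        · show Sum.inr (Sum.inr (Psi (n+2) j (q - 2^j) (Psi (n+2) j (q - 2^j) x)))
            = Sum.inr (Sum.inr x)
          rw [Psi_inv (n+2) j (q - 2^j) x]

lemma Psi_a0 : ∀ ℓ j q, j < ℓ → Psi ℓ j q (ANDa0 ℓ) = if j + 1 = ℓ then ANDa1 ℓ else ANDa0 ℓ
  | 0, j, q => fun hj => absurd hj (by omega)
  | 1, 0, q => fun _ => by rw [if_pos rfl]; rfl
  | 1, (j+1), q => fun hj => absurd hj (by omega)
  | 2, 0, q => fun _ => by rw [if_neg (by omega : ¬ (0:ℕ) + 1 = 2)]; rfl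
  | 2, (j+1), q => fun hj => by
      have hj0 : j = 0 := by omega
      subst hj0
      rw [Psi_two_succ, if_pos rfl]
      by_cases h : q = 0
      · rw [if_pos h]; rfl
      · rw [if_neg h]; rfl
  | (n+3), 0, q => fun _ => by
      rw [Psi_top, if_neg (by omega : ¬ (0:ℕ) + 1 = n + 3)]; rfl
  | (n+3), (j+1), q => fun hj => by
      rw [Psi_succ_succ]
      by_cases h : q < 2 ^ j
      · rw [if_pos h]
        by_cases hjn : j = n + 1
        · subst hjn
          rw [if_pos rfl, if_pos (by omega : n + 1 + 1 + 1 = n + 3)]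
          rfl
        · rw [if_neg hjn, if_neg (by omega : ¬ j + 1 + 1 = n + 3)]
          rfl
      · rw [if_neg h]
        by_cases hjn : j = n + 1
        · subst hjn
          rw [if_pos rfl, if_pos (by omega : n + 1 + 1 + 1 = n + 3)]
          rfl
        · rw [if_neg hjn, if_neg (by omega : ¬ j + 1 + 1 = n + 3)]
          rfl

lemma Psi_a1 : ∀ ℓ j q, j < ℓ → Psi ℓ j q (ANDa1 ℓ) = if j + 1 = ℓ then ANDa0 ℓ else ANDa1 ℓ
  | 0, j, q => fun hj => absurd hj (by omega)
  | 1, 0, q => fun _ => by rw [if_pos rfl]; rfl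
  | 1, (j+1), q => fun hj => absurd hj (by omega)
  | 2, 0, q => fun _ => by rw [if_neg (by omega : ¬ (0:ℕ) + 1 = 2)]; rfl
  | 2, (j+1), q => fun hj => by
      have hj0 : j = 0 := by omega
      subst hj0
      rw [Psi_two_succ, if_pos rfl]
      by_cases h : q = 0
      · rw [if_pos h]; rfl
      · rw [if_neg h]; rfl
  | (n+3), 0, q => fun _ => by
      rw [Psi_top, if_neg (by omega : ¬ (0:ℕ) + 1 = n + 3)]; rfl
  | (n+3), (j+1), q => fun hj => by
      rw [Psi_succ_succ]
      by_cases h : q < 2 ^ j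
      · rw [if_pos h]
        by_cases hjn : j = n + 1
        · subst hjn
          rw [if_pos rfl, if_pos (by omega : n + 1 + 1 + 1 = n + 3)]
          rfl
        · rw [if_neg hjn, if_neg (by omega : ¬ j + 1 + 1 = n + 3)]
          rfl
      · rw [if_neg h]
        by_cases hjn : j = n + 1
        · subst hjn
          rw [if_pos rfl, if_pos (by omega : n + 1 + 1 + 1 = n + 3)]
          rfl
        · rw [if_neg hjn, if_neg (by omega : ¬ j + 1 + 1 = n + 3)]
          rfl

/-! ### Psi preserves adjacency -/

lemma invol_eq_iff {α : Sort*} {φ : α → α} (hinv : ∀ x, φ (φ x) = x) {y z : α} :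
    φ y = z ↔ y = φ z :=
  ⟨fun h => by rw [← h, hinv], fun h => by rw [h, hinv]⟩

lemma Rl_rll (n : ℕ) (x : Fin 10) (y : ANDVert (n+2)) :
    Rl (n+3) (Sum.inr (Sum.inl y)) (Sum.inl x) ↔
      ((x = 2 ∧ y = ANDa0 (n+2)) ∨ (x = 3 ∧ y = ANDa1 (n+2))) :=
  (Rl_symm_iff _ _ _).trans (Rl_lrl n x y)

lemma Rl_rrl (n : ℕ) (x : Fin 10) (y : ANDVert (n+2)) :
    Rl (n+3) (Sum.inr (Sum.inr y)) (Sum.inl x) ↔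
      ((x = 4 ∧ y = ANDa0 (n+2)) ∨ (x = 5 ∧ y = ANDa1 (n+2))) :=
  (Rl_symm_iff _ _ _).trans (Rl_lrr n x y)

lemma Rl_rrrl (n : ℕ) (x y : ANDVert (n+2)) :
    Rl (n+3) (Sum.inr (Sum.inr x)) (Sum.inr (Sum.inl y)) ↔ False :=
  (Rl_symm_iff _ _ _).trans (Rl_rlrr n y x)

-- decide helpers
lemma swapP_e2 : ∀ x, swapP x = 2 ↔ x = 4 := by decide
lemma swapP_e3 : ∀ x, swapP x = 3 ↔ x = 5 := by decide
lemma swapP_e4 : ∀ x, swapP x = 4 ↔ x = 2 := by decide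
lemma swapP_e5 : ∀ x, swapP x = 5 ↔ x = 3 := by decide
lemma flip1_e2 : ∀ x, flip1 x = 2 ↔ x = 3 := by decide
lemma flip1_e3 : ∀ x, flip1 x = 3 ↔ x = 2 := by decide
lemma flip1_e4 : ∀ x, flip1 x = 4 ↔ x = 4 := by decide
lemma flip1_e5 : ∀ x, flip1 x = 5 ↔ x = 5 := by decide
lemma flip2_e2 : ∀ x, flip2 x = 2 ↔ x = 2 := by decide
lemma flip2_e3 : ∀ x, flip2 x = 3 ↔ x = 3 := by decide
lemma flip2_e4 : ∀ x, flip2 x = 4 ↔ x = 5 := by decide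
lemma flip2_e5 : ∀ x, flip2 x = 5 ↔ x = 4 := by decide
lemma rl2_swapP : ∀ x y : Fin 10, Rl 2 (swapP x) (swapP y) ↔ Rl 2 x y := by decide
lemma rl2_flip1 : ∀ x y : Fin 10, Rl 2 (flip1 x) (flip1 y) ↔ Rl 2 x y := by decide
lemma rl2_flip2 : ∀ x y : Fin 10, Rl 2 (flip2 x) (flip2 y) ↔ Rl 2 x y := by decide
lemma rl1_sw4 : ∀ x y : Fin 4, Rl 1 (sw4 x) (sw4 y) ↔ Rl 1 x y := by decide

lemma cross_id {A A' B C C' D : Prop} (h1 : A ↔ A') (h2 : C ↔ C') :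
    (A ∧ B ∨ C ∧ D) ↔ (A' ∧ B ∨ C' ∧ D) :=
  or_congr (and_congr h1 Iff.rfl) (and_congr h2 Iff.rfl)

lemma cross_sw {A A' B B' C C' D D' : Prop} (h1 : A ↔ A') (h2 : B ↔ B')
    (h3 : C ↔ C') (h4 : D ↔ D') :
    (A ∧ B ∨ C ∧ D) ↔ (C' ∧ D' ∨ A' ∧ B') :=
  (or_congr (and_congr h1 h2) (and_congr h3 h4)).trans or_comm

lemma psi_rl : ∀ ℓ j q, j < ℓ → ∀ x y, Rl ℓ (Psi ℓ j q x) (Psi ℓ j q y) ↔ Rl ℓ x y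
  | 0, j, q => fun hj => absurd hj (by omega)
  | 1, 0, q => fun _ => rl1_sw4
  | 1, (j+1), q => fun hj => absurd hj (by omega)
  | 2, 0, q => fun _ => rl2_swapP
  | 2, (j+1), q => fun hj => by
      have hj0 : j = 0 := by omega
      subst hj0
      rw [Psi_two_succ]
      by_cases h : q = 0
      · rw [if_pos h]; exact rl2_flip1
      · rw [if_neg h]; exact rl2_flip2
  | (n+3), 0, q => fun _ => by
      intro x y
      rw [Psi_top]
      rcases x with x | x | x <;> rcases y with y | y | y <;>
        simp only [Sum.map_inl, Sum.map_inr, Sum.swap_inl, Sum.swap_inr]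
      · rw [Rl_ll, Rl_ll]; exact rl2_swapP x y
      · rw [Rl_lrr, Rl_lrl]; exact cross_id (swapP_e4 x) (swapP_e5 x)
      · rw [Rl_lrl, Rl_lrr]; exact cross_id (swapP_e2 x) (swapP_e3 x)
      · rw [Rl_rrl, Rl_rll]; exact cross_id (swapP_e4 y) (swapP_e5 y)
      · rw [Rl_rrrr, Rl_rlrl]
      · rw [Rl_rrrl, Rl_rlrr]
      · rw [Rl_rll, Rl_rrl]; exact cross_id (swapP_e2 y) (swapP_e3 y)
      · rw [Rl_rlrr, Rl_rrrl]
      · rw [Rl_rlrl, Rl_rrrr]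
  | (n+3), (j+1), q => fun hj => by
      have hj' : j < n + 2 := by omega
      intro x y
      rw [Psi_succ_succ]
      have hinv' := Psi_inv (n+2) j
      by_cases h : q < 2 ^ j
      · rw [if_pos h]
        have ha0 : ∀ y, Psi (n+2) j q y = ANDa0 (n+2) ↔
            y = (if j + 1 = n + 2 then ANDa1 (n+2) else ANDa0 (n+2)) := fun y => by
          rw [invol_eq_iff (hinv' q), Psi_a0 (n+2) j q hj']
        have ha1 : ∀ y, Psi (n+2) j q y = ANDa1 (n+2) ↔
            y = (if j + 1 = n + 2 then ANDa0 (n+2) else ANDa1 (n+2)) := fun y => by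
          rw [invol_eq_iff (hinv' q), Psi_a1 (n+2) j q hj']
        rcases x with x | x | x <;> rcases y with y | y | y <;>
          simp only [Sum.map_inl, Sum.map_inr, id_eq]
        · rw [Rl_ll, Rl_ll]
          by_cases hjn : j = n + 1
          · simp only [if_pos hjn]; exact rl2_flip1 x y
          · simp only [if_neg hjn]; rfl
        · rw [Rl_lrl, Rl_lrl, ha0, ha1]
          by_cases hjn : j = n + 1
          · simp only [if_pos hjn, if_pos (by omega : j + 1 = n + 2)]
            exact cross_sw (flip1_e2 x) Iff.rfl (flip1_e3 x) Iff.rfl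
          · simp only [if_neg hjn, if_neg (by omega : ¬ j + 1 = n + 2), id_eq]
        · rw [Rl_lrr, Rl_lrr]
          by_cases hjn : j = n + 1
          · simp only [if_pos hjn]; exact cross_id (flip1_e4 x) (flip1_e5 x)
          · simp only [if_neg hjn, id_eq]
        · rw [Rl_rll, Rl_rll, ha0, ha1]
          by_cases hjn : j = n + 1
          · simp only [if_pos hjn, if_pos (by omega : j + 1 = n + 2)]
            exact cross_sw (flip1_e2 y) Iff.rfl (flip1_e3 y) Iff.rfl
          · simp only [if_neg hjn, if_neg (by omega : ¬ j + 1 = n + 2), id_eq]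
        · rw [Rl_rlrl, Rl_rlrl]; exact psi_rl (n+2) j q hj' x y
        · rw [Rl_rlrr, Rl_rlrr]
        · rw [Rl_rrl, Rl_rrl]
          by_cases hjn : j = n + 1
          · simp only [if_pos hjn]; exact cross_id (flip1_e4 y) (flip1_e5 y)
          · simp only [if_neg hjn, id_eq]
        · rw [Rl_rrrl, Rl_rrrl]
      · rw [if_neg h]
        have ha0 : ∀ y, Psi (n+2) j (q - 2^j) y = ANDa0 (n+2) ↔
            y = (if j + 1 = n + 2 then ANDa1 (n+2) else ANDa0 (n+2)) := fun y => by
          rw [invol_eq_iff (hinv' (q - 2^j)), Psi_a0 (n+2) j (q - 2^j) hj']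
        have ha1 : ∀ y, Psi (n+2) j (q - 2^j) y = ANDa1 (n+2) ↔
            y = (if j + 1 = n + 2 then ANDa0 (n+2) else ANDa1 (n+2)) := fun y => by
          rw [invol_eq_iff (hinv' (q - 2^j)), Psi_a1 (n+2) j (q - 2^j) hj']
        rcases x with x | x | x <;> rcases y with y | y | y <;>
          simp only [Sum.map_inl, Sum.map_inr, id_eq]
        · rw [Rl_ll, Rl_ll]
          by_cases hjn : j = n + 1
          · simp only [if_pos hjn]; exact rl2_flip2 x y
          · simp only [if_neg hjn]; rfl
        · rw [Rl_lrl, Rl_lrl]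
          by_cases hjn : j = n + 1
          · simp only [if_pos hjn]; exact cross_id (flip2_e2 x) (flip2_e3 x)
          · simp only [if_neg hjn, id_eq]
        · rw [Rl_lrr, Rl_lrr, ha0, ha1]
          by_cases hjn : j = n + 1
          · simp only [if_pos hjn, if_pos (by omega : j + 1 = n + 2)]
            exact cross_sw (flip2_e4 x) Iff.rfl (flip2_e5 x) Iff.rfl
          · simp only [if_neg hjn, if_neg (by omega : ¬ j + 1 = n + 2), id_eq]
        · rw [Rl_rll, Rl_rll]
          by_cases hjn : j = n + 1
          · simp only [if_pos hjn]; exact cross_id (flip2_e2 y) (flip2_e3 y)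
          · simp only [if_neg hjn, id_eq]
        · rw [Rl_rlrr, Rl_rlrr]
        · rw [Rl_rrl, Rl_rrl, ha0, ha1]
          by_cases hjn : j = n + 1
          · simp only [if_pos hjn, if_pos (by omega : j + 1 = n + 2)]
            exact cross_sw (flip2_e4 y) Iff.rfl (flip2_e5 y) Iff.rfl
          · simp only [if_neg hjn, if_neg (by omega : ¬ j + 1 = n + 2), id_eq]
        · rw [Rl_rrrl, Rl_rrrl]
        · rw [Rl_rrrr, Rl_rrrr]; exact psi_rl (n+2) j (q - 2^j) hj' x y

lemma Psi_adj (ℓ j q : ℕ) (hj : j < ℓ) (x y : ANDVert ℓ) :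
    (ANDgraph ℓ).Adj (Psi ℓ j q x) (Psi ℓ j q y) ↔ (ANDgraph ℓ).Adj x y := by
  have hinj : Function.Injective (Psi ℓ j q) := Function.LeftInverse.injective (Psi_inv ℓ j q)
  rw [ANDgraph_adj', ANDgraph_adj', psi_rl ℓ j q hj]
  constructor
  · rintro ⟨hne, hr⟩
    exact ⟨fun hh => hne (by rw [hh]), hr⟩
  · rintro ⟨hne, hr⟩
    exact ⟨fun hh => hne (hinj hh), hr⟩

/-! ### Action of Psi on the in-terminals -/

/-- index action: swap the two halves of the block `(j, q)` -/
def swIdx (ℓ j q i : ℕ) : ℕ :=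
  if q * 2^(ℓ-j) ≤ i ∧ i < q * 2^(ℓ-j) + 2^(ℓ-j-1) then i + 2^(ℓ-j-1)
  else if q * 2^(ℓ-j) + 2^(ℓ-j-1) ≤ i ∧ i < (q+1) * 2^(ℓ-j) then i - 2^(ℓ-j-1)
  else i

lemma block_bound {j m q : ℕ} (hj : j ≤ m) (hq : q < 2^j) : (q+1) * 2^(m-j) ≤ 2^m := by
  calc (q+1) * 2^(m-j) ≤ 2^j * 2^(m-j) := Nat.mul_le_mul_right _ hq
  _ = 2^m := by rw [← pow_add]; congr 1; omega

lemma pow_split {j m : ℕ} (hj : j < m) : 2^(m-j) = 2^(m-j-1) + 2^(m-j-1) := by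
  rw [← two_mul, ← pow_succ']
  congr 1
  omega

lemma pow_mul_pow {j m : ℕ} (hj : j ≤ m) : 2^j * 2^(m-j) = 2^m := by
  rw [← pow_add]; congr 1; omega

lemma swIdx_lt {ℓ j q i : ℕ} (hj : j < ℓ) (hq : q < 2^j) (hi : i < 2^ℓ) :
    swIdx ℓ j q i < 2^ℓ := by
  have hbb := block_bound (le_of_lt hj) hq
  have hps := pow_split hj
  have h4 : (q+1) * 2^(ℓ-j) = q * 2^(ℓ-j) + 2^(ℓ-j) := by rw [Nat.add_mul, one_mul]
  unfold swIdx
  split_ifs <;> omega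

lemma swIdx_succ_low {n j q i : ℕ} (hj : j < n+2) (hi : i < 2^(n+2)) :
    swIdx (n+3) (j+1) q i = swIdx (n+2) j q i := by
  unfold swIdx
  rw [(by omega : n+3-(j+1) = n+2-j)]

lemma swIdx_succ_high {n j q i : ℕ} (hj : j < n+2) (hq : 2^j ≤ q) (hi : 2^(n+2) ≤ i) :
    swIdx (n+3) (j+1) q i = swIdx (n+2) j (q - 2^j) (i - 2^(n+2)) + 2^(n+2) := by
  have h1 : 2^j * 2^(n+2-j) = 2^(n+2) := pow_mul_pow (by omega)
  have hps := pow_split hj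
  have h3 : q * 2^(n+2-j) = (q - 2^j) * 2^(n+2-j) + 2^(n+2) := by
    rw [← h1, ← Nat.add_mul, Nat.sub_add_cancel hq]
  have h4 : (q+1) * 2^(n+2-j) = q * 2^(n+2-j) + 2^(n+2-j) := by rw [Nat.add_mul, one_mul]
  have h5 : (q - 2^j + 1) * 2^(n+2-j) = (q - 2^j) * 2^(n+2-j) + 2^(n+2-j) := by
    rw [Nat.add_mul, one_mul]
  unfold swIdx
  rw [(by omega : n+3-(j+1) = n+2-j)]
  split_ifs <;> omega

lemma swIdx_out_high {n j q i : ℕ} (hj : j < n+2) (hq : q < 2^j) (hi : 2^(n+2) ≤ i) :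
    swIdx (n+3) (j+1) q i = i := by
  have hbb := block_bound (m := n+2) (by omega : j ≤ n+2) hq
  have hps := pow_split (by omega : j < n+2)
  have hBpos : 0 < 2^(n+2-j-1) := Nat.pow_pos (by omega)
  have h4 : (q+1) * 2^(n+2-j) = q * 2^(n+2-j) + 2^(n+2-j) := by rw [Nat.add_mul, one_mul]
  unfold swIdx
  rw [(by omega : n+3-(j+1) = n+2-j)]
  split_ifs <;> omega

lemma swIdx_out_low {n j q i : ℕ} (hj : j < n+2) (hq : 2^j ≤ q) (hi : i < 2^(n+2)) :
    swIdx (n+3) (j+1) q i = i := by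
  have key : 2^(n+2) ≤ q * 2^(n+2-j) :=
    le_trans (le_of_eq (pow_mul_pow (by omega)).symm) (Nat.mul_le_mul_right _ hq)
  have hBpos : 0 < 2^(n+2-j-1) := Nat.pow_pos (by omega)
  unfold swIdx
  rw [(by omega : n+3-(j+1) = n+2-j)]
  split_ifs <;> omega

lemma ANDb_succ (n i : ℕ) : ANDb (n+3) i =
    if i < 2 ^ (n + 2) then Sum.inr (Sum.inl (ANDb (n + 2) i))
    else Sum.inr (Sum.inr (ANDb (n + 2) (i - 2 ^ (n + 2)))) := rfl

lemma Psi_b : ∀ ℓ j q, j < ℓ → q < 2^j → ∀ i, i < 2^ℓ →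
    Psi ℓ j q (ANDb ℓ i) = ANDb ℓ (swIdx ℓ j q i)
  | 0, j, q => fun hj => absurd hj (by omega)
  | 1, 0, q => fun _ hq i hi => by
      interval_cases q
      interval_cases i <;> decide
  | 1, (j+1), q => fun hj => absurd hj (by omega)
  | 2, 0, q => fun _ hq i hi => by
      interval_cases q
      interval_cases i <;> decide
  | 2, (j+1), q => fun hj hq i hi => by
      have hj0 : j = 0 := by omega
      subst hj0
      interval_cases q <;> interval_cases i <;> decide
  | (n+3), 0, q => fun _ hq i hi => by
      interval_cases q
      rw [Psi_top]
      by_cases h : i < 2^(n+2)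
      · rw [ANDb_succ, if_pos h]
        have hsw : swIdx (n+3) 0 0 i = i + 2^(n+2) := by
          unfold swIdx
          rw [(by omega : (n+3) - 0 - 1 = n + 2), Nat.sub_zero]
          have hps : (2:ℕ)^(n+3) = 2^(n+2) + 2^(n+2) := by rw [pow_succ]; omega
          split_ifs <;> omega
        rw [hsw, ANDb_succ, if_neg (by omega), Nat.add_sub_cancel]
        rfl
      · rw [ANDb_succ, if_neg h]
        have hps : (2:ℕ)^(n+3) = 2^(n+2) + 2^(n+2) := by rw [pow_succ]; omega
        have hsw : swIdx (n+3) 0 0 i = i - 2^(n+2) := by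
          unfold swIdx
          rw [(by omega : (n+3) - 0 - 1 = n + 2), Nat.sub_zero]
          split_ifs <;> omega
        rw [hsw, ANDb_succ, if_pos (by omega)]
        rfl
  | (n+3), (j+1), q => fun hj hq i hi => by
      have hj' : j < n + 2 := by omega
      rw [Psi_succ_succ]
      by_cases h : q < 2 ^ j
      · rw [if_pos h]
        by_cases hilow : i < 2^(n+2)
        · rw [ANDb_succ, if_pos hilow]
          have : (Sum.map (if j = n + 1 then flip1 else id)
              (Sum.map (Psi (n+2) j q) id) (Sum.inr (Sum.inl (ANDb (n+2) i))) : ANDVert (n+3))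
              = Sum.inr (Sum.inl (Psi (n+2) j q (ANDb (n+2) i))) := rfl
          rw [this, Psi_b (n+2) j q hj' h i hilow, swIdx_succ_low hj' hilow,
            ANDb_succ, if_pos (swIdx_lt hj' h hilow)]
        · rw [ANDb_succ, if_neg hilow, swIdx_out_high hj' h (by omega), ANDb_succ,
            if_neg hilow]
          rfl
      · rw [if_neg h]
        by_cases hilow : i < 2^(n+2)
        · rw [ANDb_succ, if_pos hilow, swIdx_out_low hj' (by omega) hilow, ANDb_succ,
            if_pos hilow]
          rfl
        · rw [ANDb_succ, if_neg hilow]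
          have : (Sum.map (if j = n + 1 then flip2 else id)
              (Sum.map id (Psi (n+2) j (q - 2^j)))
              (Sum.inr (Sum.inr (ANDb (n+2) (i - 2^(n+2))))) : ANDVert (n+3))
              = Sum.inr (Sum.inr (Psi (n+2) j (q - 2^j) (ANDb (n+2) (i - 2^(n+2))))) := rfl
          have hq' : q - 2^j < 2^j := by
            have : (2:ℕ)^(j+1) = 2^j + 2^j := by rw [pow_succ]; omega
            omega
          have hi' : i - 2^(n+2) < 2^(n+2) := by
            have : (2:ℕ)^(n+3) = 2^(n+2) + 2^(n+2) := by rw [pow_succ]; omega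
            omega
          rw [this, Psi_b (n+2) j (q - 2^j) hj' hq' _ hi',
            swIdx_succ_high hj' (by omega) (by omega), ANDb_succ, if_neg (by omega),
            Nat.add_sub_cancel]

/-! ### The key lemma: singleton in-terminals make everything singleton -/

instance : Fintype (ANDVert 1) := inferInstanceAs (Fintype (Fin 4))
instance : Fintype (ANDVert 2) := inferInstanceAs (Fintype (Fin 10))
instance (k : ℕ) : OfNat (ANDVert 1) k := inferInstanceAs (OfNat (Fin 4) k)
instance (k : ℕ) : OfNat (ANDVert 2) k := inferInstanceAs (OfNat (Fin 10) k)

lemma adj_ll (n : ℕ) (x y : Fin 10) :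
    (ANDgraph (n+3)).Adj (Sum.inl x) (Sum.inl y) ↔ (ANDgraph 2).Adj x y := by
  rw [ANDgraph_adj', ANDgraph_adj', Rl_ll]
  exact and_congr_left (fun _ => ⟨fun h e => h (congrArg _ e), fun h e => h (Sum.inl.inj e)⟩)

lemma adj_rlrl (n : ℕ) (x y : ANDVert (n+2)) :
    (ANDgraph (n+3)).Adj (Sum.inr (Sum.inl x)) (Sum.inr (Sum.inl y)) ↔
      (ANDgraph (n+2)).Adj x y := by
  rw [ANDgraph_adj', ANDgraph_adj', Rl_rlrl]
  exact and_congr_left (fun _ => ⟨fun h e => h (congrArg _ (congrArg _ e)),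
    fun h e => h (Sum.inl.inj (Sum.inr.inj e))⟩)

lemma adj_rrrr (n : ℕ) (x y : ANDVert (n+2)) :
    (ANDgraph (n+3)).Adj (Sum.inr (Sum.inr x)) (Sum.inr (Sum.inr y)) ↔
      (ANDgraph (n+2)).Adj x y := by
  rw [ANDgraph_adj', ANDgraph_adj', Rl_rrrr]
  exact and_congr_left (fun _ => ⟨fun h e => h (congrArg _ (congrArg _ e)),
    fun h e => h (Sum.inr.inj (Sum.inr.inj e))⟩)

def c2 (k : Fin 10) : ANDVert 2 := k

lemma classify {W : Type} {H : SimpleGraph W} {ρ : Setoid W} {ℓ : ℕ} {f : ANDVert ℓ → W}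
    (hadjf : ∀ x y, H.Adj (f x) (f y) ↔ (ANDgraph ℓ).Adj x y)
    (hOut : ∀ x w, H.Adj (f x) w → (∀ y, w ≠ f y) → x ≠ ANDa0 ℓ → x ≠ ANDa1 ℓ → Sing ρ w)
    (v : ANDVert ℓ) (hv0 : v ≠ ANDa0 ℓ) (hv1 : v ≠ ANDa1 ℓ) :
    ∀ u, H.Adj u (f v) →
      (∃ z, u = f z ∧ (ANDgraph ℓ).Adj z v) ∨ ((∀ y, u ≠ f y) ∧ Sing ρ u) := by
  intro u hu
  by_cases hr : ∃ z, u = f z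
  · rcases hr with ⟨z, rfl⟩
    exact Or.inl ⟨z, rfl, (hadjf z v).mp hu⟩
  · exact Or.inr ⟨fun y hy => hr ⟨y, hy⟩, hOut v u hu.symm (fun y hy => hr ⟨y, hy⟩) hv0 hv1⟩

lemma key_s7 : ∀ ℓ, 1 ≤ ℓ → ∀ {W : Type} (H : SimpleGraph W) (ρ : Setoid W)
    (f : ANDVert ℓ → W),
    IsStable H ρ →
    Function.Injective f →
    (∀ x y, H.Adj (f x) (f y) ↔ (ANDgraph ℓ).Adj x y) →
    (∀ x w, H.Adj (f x) w → (∀ y, w ≠ f y) → x ≠ ANDa0 ℓ → x ≠ ANDa1 ℓ → Sing ρ w) →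
    (∀ i, i < 2^ℓ → Sing ρ (f (ANDb ℓ i))) →
    ∀ x, Sing ρ (f x)
  | 0 => fun h => absurd h (by omega)
  | 1 => fun _ W H ρ f hst hinj hadjf hOut hb => by
      have hb0 : Sing ρ (f (ANDb 1 0)) := hb 0 (by omega)
      have hb1 : Sing ρ (f (ANDb 1 1)) := hb 1 (by omega)
      have ha0 : Sing ρ (f (ANDa0 1)) := by
        apply step1 hst hb0 ((hadjf _ _).mpr (by decide))
        intro u hu
        rcases classify hadjf hOut (ANDb 1 0) (by decide) (by decide) u hu with
          ⟨z, rfl, hz⟩ | ⟨hnr, hs⟩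
        · have := (by decide : ∀ z : Fin 4, (ANDgraph 1).Adj z (ANDb 1 0) → z = ANDa0 1) z hz
          subst this
          exact Or.inl rfl
        · exact Or.inr ⟨fun h => hnr _ h, hs⟩
      have ha1 : Sing ρ (f (ANDa1 1)) := by
        apply step1 hst hb1 ((hadjf _ _).mpr (by decide))
        intro u hu
        rcases classify hadjf hOut (ANDb 1 1) (by decide) (by decide) u hu with
          ⟨z, rfl, hz⟩ | ⟨hnr, hs⟩
        · have := (by decide : ∀ z : Fin 4, (ANDgraph 1).Adj z (ANDb 1 1) → z = ANDa1 1) z hz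
          subst this
          exact Or.inl rfl
        · exact Or.inr ⟨fun h => hnr _ h, hs⟩
      intro x
      rcases (by decide : ∀ x : Fin 4, x = ANDa0 1 ∨ x = ANDa1 1 ∨ x = ANDb 1 0 ∨ x = ANDb 1 1)
        x with rfl | rfl | rfl | rfl
      · exact ha0
      · exact ha1
      · exact hb0
      · exact hb1
  | 2 => fun _ W H ρ f hst hinj hadjf hOut hb => by
      have hb0 : Sing ρ (f (ANDb 2 0)) := hb 0 (by omega)
      have hb1 : Sing ρ (f (ANDb 2 1)) := hb 1 (by omega)
      have hb2 : Sing ρ (f (ANDb 2 2)) := hb 2 (by omega)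
      have hb3 : Sing ρ (f (ANDb 2 3)) := hb 3 (by omega)
      -- the four middle vertices
      have hc0 : Sing ρ (f (6 : Fin 10)) := by
        apply step2 hst hb0 hb2 ((hadjf _ _).mpr (by decide))
          (fun h => (by decide : ¬ (ANDgraph 2).Adj 6 (ANDb 2 2)) ((hadjf _ _).mp h))
        intro u hu
        rcases classify hadjf hOut (ANDb 2 0) (by decide) (by decide) u hu with
          ⟨z, rfl, hz⟩ | ⟨hnr, hs⟩
        · rcases (by decide : ∀ z : Fin 10, (ANDgraph 2).Adj z (ANDb 2 0) →
              z = 6 ∨ z = 8) z hz with rfl | rfl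
          · exact Or.inl rfl
          · exact Or.inr (Or.inl ((hadjf _ _).mpr (by decide)))
        · exact Or.inr (Or.inr ⟨fun h => hnr _ h, hs⟩)
      have hc1 : Sing ρ (f (7 : Fin 10)) := by
        apply step2 hst hb1 hb3 ((hadjf _ _).mpr (by decide))
          (fun h => (by decide : ¬ (ANDgraph 2).Adj 7 (ANDb 2 3)) ((hadjf _ _).mp h))
        intro u hu
        rcases classify hadjf hOut (ANDb 2 1) (by decide) (by decide) u hu with
          ⟨z, rfl, hz⟩ | ⟨hnr, hs⟩
        · rcases (by decide : ∀ z : Fin 10, (ANDgraph 2).Adj z (ANDb 2 1) →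
              z = 7 ∨ z = 9) z hz with rfl | rfl
          · exact Or.inl rfl
          · exact Or.inr (Or.inl ((hadjf _ _).mpr (by decide)))
        · exact Or.inr (Or.inr ⟨fun h => hnr _ h, hs⟩)
      have hc2 : Sing ρ (f (8 : Fin 10)) := by
        apply step2 hst hb2 hb1 ((hadjf _ _).mpr (by decide))
          (fun h => (by decide : ¬ (ANDgraph 2).Adj 8 (ANDb 2 1)) ((hadjf _ _).mp h))
        intro u hu
        rcases classify hadjf hOut (ANDb 2 2) (by decide) (by decide) u hu with
          ⟨z, rfl, hz⟩ | ⟨hnr, hs⟩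
        · rcases (by decide : ∀ z : Fin 10, (ANDgraph 2).Adj z (ANDb 2 2) →
              z = 8 ∨ z = 7) z hz with rfl | rfl
          · exact Or.inl rfl
          · exact Or.inr (Or.inl ((hadjf _ _).mpr (by decide)))
        · exact Or.inr (Or.inr ⟨fun h => hnr _ h, hs⟩)
      have hc3 : Sing ρ (f (9 : Fin 10)) := by
        apply step2 hst hb3 hb0 ((hadjf _ _).mpr (by decide))
          (fun h => (by decide : ¬ (ANDgraph 2).Adj 9 (ANDb 2 0)) ((hadjf _ _).mp h))
        intro u hu
        rcases classify hadjf hOut (ANDb 2 3) (by decide) (by decide) u hu with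
          ⟨z, rfl, hz⟩ | ⟨hnr, hs⟩
        · rcases (by decide : ∀ z : Fin 10, (ANDgraph 2).Adj z (ANDb 2 3) →
              z = 9 ∨ z = 6) z hz with rfl | rfl
          · exact Or.inl rfl
          · exact Or.inr (Or.inl ((hadjf _ _).mpr (by decide)))
        · exact Or.inr (Or.inr ⟨fun h => hnr _ h, hs⟩)
      have ha0 : Sing ρ (f (ANDa0 2)) := by
        apply step1 hst hc0 ((hadjf _ _).mpr (by decide))
        intro u hu
        rcases classify hadjf hOut (c2 6) (by decide) (by decide) u hu with
          ⟨z, rfl, hz⟩ | ⟨hnr, hs⟩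
        · rcases (by decide : ∀ z : Fin 10, (ANDgraph 2).Adj z (6 : Fin 10) →
              z = ANDa0 2 ∨ z = 2 ∨ z = 5) z hz with rfl | rfl | rfl
          · exact Or.inl rfl
          · exact Or.inr ⟨fun h => (by decide : ¬ ((2:Fin 10) = ANDa0 2)) (hinj h), hb0⟩
          · exact Or.inr ⟨fun h => (by decide : ¬ ((5:Fin 10) = ANDa0 2)) (hinj h), hb3⟩
        · exact Or.inr ⟨fun h => hnr _ h, hs⟩
      have ha1 : Sing ρ (f (ANDa1 2)) := by
        apply step1 hst hc2 ((hadjf _ _).mpr (by decide))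
        intro u hu
        rcases classify hadjf hOut (c2 8) (by decide) (by decide) u hu with
          ⟨z, rfl, hz⟩ | ⟨hnr, hs⟩
        · rcases (by decide : ∀ z : Fin 10, (ANDgraph 2).Adj z (8 : Fin 10) →
              z = ANDa1 2 ∨ z = 2 ∨ z = 4) z hz with rfl | rfl | rfl
          · exact Or.inl rfl
          · exact Or.inr ⟨fun h => (by decide : ¬ ((2:Fin 10) = ANDa1 2)) (hinj h), hb0⟩
          · exact Or.inr ⟨fun h => (by decide : ¬ ((4:Fin 10) = ANDa1 2)) (hinj h), hb2⟩
        · exact Or.inr ⟨fun h => hnr _ h, hs⟩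
      intro x
      rcases (by decide : ∀ x : Fin 10, x = ANDa0 2 ∨ x = ANDa1 2 ∨ x = ANDb 2 0 ∨
          x = ANDb 2 1 ∨ x = ANDb 2 2 ∨ x = ANDb 2 3 ∨ x = 6 ∨ x = 7 ∨ x = 8 ∨ x = 9)
        x with rfl | rfl | rfl | rfl | rfl | rfl | rfl | rfl | rfl | rfl
      · exact ha0
      · exact ha1
      · exact hb0
      · exact hb1
      · exact hb2
      · exact hb3
      · exact hc0
      · exact hc1
      · exact hc2
      · exact hc3
  | (n+3) => fun _ W H ρ f hst hinj hadjf hOut hb => by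
      have hp : (2:ℕ)^(n+3) = 2^(n+2) + 2^(n+2) := by rw [pow_succ]; omega
      -- left child
      have hL : ∀ x, Sing ρ (f (Sum.inr (Sum.inl x))) := by
        apply key_s7 (n+2) (by omega) H ρ (fun x => f (Sum.inr (Sum.inl x))) hst
        · intro a b h
          exact Sum.inl.inj (Sum.inr.inj (hinj h))
        · intro x y
          rw [hadjf, adj_rlrl]
        · intro x w hxw hw hx0 hx1
          by_cases hwf : ∃ z, w = f z
          · rcases hwf with ⟨z, rfl⟩
            have hz := ((hadjf _ _).mp hxw)
            rcases z with t | t | t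
            · exfalso
              have hr := ((ANDgraph_adj' _ _ _).mp hz).2
              rw [Rl_symm_iff, Rl_lrl] at hr
              rcases hr with ⟨_, h⟩ | ⟨_, h⟩
              · exact hx0 h
              · exact hx1 h
            · exact absurd rfl (hw t)
            · exfalso
              exact (Rl_rlrr n x t).mp ((ANDgraph_adj' _ _ _).mp hz).2
          · exact hOut (Sum.inr (Sum.inl x)) w hxw (fun y hy => hwf ⟨y, hy⟩)
              (fun h => by cases h) (fun h => by cases h)
        · intro i hi
          have : (ANDb (n+3) i) = Sum.inr (Sum.inl (ANDb (n+2) i)) := by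
            rw [ANDb_succ, if_pos hi]
          rw [← this]
          exact hb i (by omega)
      -- right child
      have hR : ∀ x, Sing ρ (f (Sum.inr (Sum.inr x))) := by
        apply key_s7 (n+2) (by omega) H ρ (fun x => f (Sum.inr (Sum.inr x))) hst
        · intro a b h
          exact Sum.inr.inj (Sum.inr.inj (hinj h))
        · intro x y
          rw [hadjf, adj_rrrr]
        · intro x w hxw hw hx0 hx1
          by_cases hwf : ∃ z, w = f z
          · rcases hwf with ⟨z, rfl⟩
            have hz := ((hadjf _ _).mp hxw)
            rcases z with t | t | t
            · exfalso
              have hr := ((ANDgraph_adj' _ _ _).mp hz).2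
              rw [Rl_symm_iff, Rl_lrr] at hr
              rcases hr with ⟨_, h⟩ | ⟨_, h⟩
              · exact hx0 h
              · exact hx1 h
            · exfalso
              exact (Rl_rrrl n t x).mp ((ANDgraph_adj' _ _ _).mp hz).2
            · exact absurd rfl (hw t)
          · exact hOut (Sum.inr (Sum.inr x)) w hxw (fun y hy => hwf ⟨y, hy⟩)
              (fun h => by cases h) (fun h => by cases h)
        · intro i hi
          have : (ANDb (n+3) (i + 2^(n+2))) = Sum.inr (Sum.inr (ANDb (n+2) i)) := by
            rw [ANDb_succ, if_neg (by omega), Nat.add_sub_cancel]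
          rw [← this]
          exact hb _ (by omega)
      -- the in-terminals of the top gadget
      have hTb : ∀ t : Fin 10, ∀ z : ANDVert (n+2),
          (ANDrel (n+3) (Sum.inl t) (Sum.inr (Sum.inl z))) →
          Sing ρ (f (Sum.inr (Sum.inl z))) → H.Adj (f (Sum.inl t)) (f (Sum.inr (Sum.inl z))) := by
        intro t z hrel _
        exact (hadjf _ _).mpr ((ANDgraph_adj' _ _ _).mpr
          ⟨fun h => (by cases h), Or.inl hrel⟩)
      have hT2 : Sing ρ (f (Sum.inl (2 : Fin 10))) := by
        apply step1 hst (hL (ANDa0 (n+2)))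
          (hTb 2 (ANDa0 (n+2)) (Or.inl ⟨rfl, rfl⟩) (hL _))
        intro u hu
        rcases classify hadjf hOut (Sum.inr (Sum.inl (ANDa0 (n+2))))
          (fun h => by cases h) (fun h => by cases h) u hu with
          ⟨z, rfl, hz⟩ | ⟨hnr, hs⟩
        · have hr := ((ANDgraph_adj' _ _ _).mp hz).2
          rcases z with t | t | t
          · rw [Rl_lrl] at hr
            rcases hr with ⟨rfl, _⟩ | ⟨_, h⟩
            · exact Or.inl rfl
            · exact absurd h (ANDa0_ne_a1 (n+2))
          · exact Or.inr ⟨fun h => (by cases hinj h), hL t⟩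
          · exact absurd hr ((Rl_rrrl n t _).mp)
        · exact Or.inr ⟨fun h => hnr _ h, hs⟩
      have hT3 : Sing ρ (f (Sum.inl (3 : Fin 10))) := by
        apply step1 hst (hL (ANDa1 (n+2)))
          (hTb 3 (ANDa1 (n+2)) (Or.inr ⟨rfl, rfl⟩) (hL _))
        intro u hu
        rcases classify hadjf hOut (Sum.inr (Sum.inl (ANDa1 (n+2))))
          (fun h => by cases h) (fun h => by cases h) u hu with
          ⟨z, rfl, hz⟩ | ⟨hnr, hs⟩
        · have hr := ((ANDgraph_adj' _ _ _).mp hz).2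
          rcases z with t | t | t
          · rw [Rl_lrl] at hr
            rcases hr with ⟨_, h⟩ | ⟨rfl, _⟩
            · exact absurd h.symm (ANDa0_ne_a1 (n+2))
            · exact Or.inl rfl
          · exact Or.inr ⟨fun h => (by cases hinj h), hL t⟩
          · exact absurd hr ((Rl_rrrl n t _).mp)
        · exact Or.inr ⟨fun h => hnr _ h, hs⟩
      have hTc : ∀ t : Fin 10, ∀ z : ANDVert (n+2),
          (ANDrel (n+3) (Sum.inl t) (Sum.inr (Sum.inr z))) →
          H.Adj (f (Sum.inl t)) (f (Sum.inr (Sum.inr z))) := by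
        intro t z hrel
        exact (hadjf _ _).mpr ((ANDgraph_adj' _ _ _).mpr
          ⟨fun h => (by cases h), Or.inl hrel⟩)
      have hT4 : Sing ρ (f (Sum.inl (4 : Fin 10))) := by
        apply step1 hst (hR (ANDa0 (n+2))) (hTc 4 (ANDa0 (n+2)) (Or.inl ⟨rfl, rfl⟩))
        intro u hu
        rcases classify hadjf hOut (Sum.inr (Sum.inr (ANDa0 (n+2))))
          (fun h => by cases h) (fun h => by cases h) u hu with
          ⟨z, rfl, hz⟩ | ⟨hnr, hs⟩
        · have hr := ((ANDgraph_adj' _ _ _).mp hz).2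
          rcases z with t | t | t
          · rw [Rl_lrr] at hr
            rcases hr with ⟨rfl, _⟩ | ⟨_, h⟩
            · exact Or.inl rfl
            · exact absurd h (ANDa0_ne_a1 (n+2))
          · exact absurd hr ((Rl_rlrr n t _).mp)
          · exact Or.inr ⟨fun h => (by cases hinj h), hR t⟩
        · exact Or.inr ⟨fun h => hnr _ h, hs⟩
      have hT5 : Sing ρ (f (Sum.inl (5 : Fin 10))) := by
        apply step1 hst (hR (ANDa1 (n+2))) (hTc 5 (ANDa1 (n+2)) (Or.inr ⟨rfl, rfl⟩))
        intro u hu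
        rcases classify hadjf hOut (Sum.inr (Sum.inr (ANDa1 (n+2))))
          (fun h => by cases h) (fun h => by cases h) u hu with
          ⟨z, rfl, hz⟩ | ⟨hnr, hs⟩
        · have hr := ((ANDgraph_adj' _ _ _).mp hz).2
          rcases z with t | t | t
          · rw [Rl_lrr] at hr
            rcases hr with ⟨_, h⟩ | ⟨rfl, _⟩
            · exact absurd h.symm (ANDa0_ne_a1 (n+2))
            · exact Or.inl rfl
          · exact absurd hr ((Rl_rlrr n t _).mp)
          · exact Or.inr ⟨fun h => (by cases hinj h), hR t⟩
        · exact Or.inr ⟨fun h => hnr _ h, hs⟩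
      -- the top gadget
      have hT : ∀ x : Fin 10, Sing ρ (f (Sum.inl x)) := by
        apply key_s7 2 (by omega) H ρ (fun x : ANDVert 2 => f (Sum.inl x)) hst
        · intro a b h
          exact Sum.inl.inj (hinj h)
        · intro x y
          rw [hadjf, adj_ll]
        · intro x w hxw hw hx0 hx1
          by_cases hwf : ∃ z, w = f z
          · rcases hwf with ⟨z, rfl⟩
            rcases z with t | t | t
            · exact absurd rfl (hw t)
            · exact hL t
            · exact hR t
          · exact hOut (Sum.inl x) w hxw (fun y hy => hwf ⟨y, hy⟩)
              (fun h => hx0 (Sum.inl.inj h)) (fun h => hx1 (Sum.inl.inj h))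
        · intro i hi
          interval_cases i
          · exact hT2
          · exact hT3
          · exact hT4
          · exact hT5
      intro x
      rcases x with x | x | x
      · exact hT x
      · exact hL x
      · exact hR x

/-! ### Using automorphisms against the coarsest stable partition -/

lemma use_aut {V : Type*} {G : SimpleGraph V} {ψ : Set (Set V)} {ρ : Setoid V}
    (hρ : IsCoarsestStableRefining G ψ ρ) (φ : V → V) (hinv : ∀ x, φ (φ x) = x)
    (hadj : ∀ x y, G.Adj (φ x) (φ y) ↔ G.Adj x y)
    (hcell : ∀ C ∈ ψ, ∀ x ∈ C, φ x ∈ C) : ∀ x, ρ.r x (φ x) := by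
  have hst := orb_stable G φ hinv hadj
  have href : RefinesCells (orbSetoid φ hinv) ψ := by
    intro u v huv
    have huv' : v = u ∨ v = φ u := huv
    rcases huv' with h | h
    · by_cases hu : u ∈ ⋃₀ ψ
      · rcases hu with ⟨C, hC, huC⟩
        exact Or.inl ⟨C, hC, huC, by rw [h]; exact huC⟩
      · exact Or.inr ⟨hu, by rw [h]; exact hu⟩
    · by_cases hu : u ∈ ⋃₀ ψ
      · rcases hu with ⟨C, hC, huC⟩
        exact Or.inl ⟨C, hC, huC, by rw [h]; exact hcell C hC u huC⟩
      · refine Or.inr ⟨hu, fun hv => hu ?_⟩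
        rcases hv with ⟨C, hC, hvC⟩
        refine ⟨C, hC, ?_⟩
        rw [h] at hvC
        have := hcell C hC _ hvC
        rwa [hinv u] at this
  intro x
  exact hρ.2.2 _ hst href x (φ x) (Or.inr rfl)

lemma swIdx_mem {ℓ j q i : ℕ} (hj : j < ℓ)
    (h1 : q * 2^(ℓ-j) ≤ i) (h2 : i < (q+1) * 2^(ℓ-j)) :
    q * 2^(ℓ-j) ≤ swIdx ℓ j q i ∧ swIdx ℓ j q i < (q+1) * 2^(ℓ-j) := by
  have hps := pow_split hj
  have h4 : (q+1) * 2^(ℓ-j) = q * 2^(ℓ-j) + 2^(ℓ-j) := by rw [Nat.add_mul, one_mul]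
  unfold swIdx
  split_ifs <;> omega

lemma swIdx_id {ℓ j q i : ℕ} (hj : j < ℓ)
    (hout : i < q * 2^(ℓ-j) ∨ (q+1) * 2^(ℓ-j) ≤ i) : swIdx ℓ j q i = i := by
  have hps := pow_split hj
  have h4 : (q+1) * 2^(ℓ-j) = q * 2^(ℓ-j) + 2^(ℓ-j) := by rw [Nat.add_mul, one_mul]
  have hBpos : 0 < 2^(ℓ-j-1) := Nat.pow_pos (by omega)
  unfold swIdx
  split_ifs <;> omega

/-- Members of cells of a binary block partition are in-terminals with small index. -/
lemma cell_elt {ℓ : ℕ} {ψ : Set (Set (ANDVert ℓ))} (hψ : IsBinBlockPartition ℓ ψ)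
    {C : Set (ANDVert ℓ)} (hC : C ∈ ψ) {x : ANDVert ℓ} (hx : x ∈ C) :
    ∃ i, i < 2^ℓ ∧ x = ANDb ℓ i := by
  obtain ⟨j, hj, q, hq, rfl⟩ := hψ.1 C hC
  obtain ⟨i, hi, rfl⟩ := hx
  refine ⟨i, ?_, rfl⟩
  have := block_bound hj hq
  exact lt_of_lt_of_le hi.2 this

lemma cells_eq {ℓ : ℕ} {ψ : Set (Set (ANDVert ℓ))} (hψ : IsBinBlockPartition ℓ ψ)
    {C C' : Set (ANDVert ℓ)} (hC : C ∈ ψ) (hC' : C' ∈ ψ) {x : ANDVert ℓ}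
    (hx : x ∈ C) (hx' : x ∈ C') : C = C' := by
  by_contra hne
  exact Set.disjoint_left.mp (hψ.2.2 hC hC' hne) hx hx'

/-- The swap of the two halves of a block contained in a cell is compatible with `ρ`. -/
lemma swap_rel {ℓ : ℕ} {ψ : Set (Set (ANDVert ℓ))} {ρ : Setoid (ANDVert ℓ)}
    (hρ : IsCoarsestStableRefining (ANDgraph ℓ) ψ ρ) (hψ : IsBinBlockPartition ℓ ψ)
    {j q : ℕ} (hj : j < ℓ) (hq : q < 2^j) {C : Set (ANDVert ℓ)} (hC : C ∈ ψ)
    (hsub : ∀ i, q * 2^(ℓ-j) ≤ i → i < (q+1) * 2^(ℓ-j) → ANDb ℓ i ∈ C) :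
    ∀ i, i < 2^ℓ → ρ.r (ANDb ℓ i) (ANDb ℓ (swIdx ℓ j q i)) := by
  have hcell : ∀ C' ∈ ψ, ∀ x ∈ C', Psi ℓ j q x ∈ C' := by
    intro C' hC' x hx
    obtain ⟨i, hi, rfl⟩ := cell_elt hψ hC' hx
    rw [Psi_b ℓ j q hj hq i hi]
    by_cases hin : q * 2^(ℓ-j) ≤ i ∧ i < (q+1) * 2^(ℓ-j)
    · have hCeq : C = C' := cells_eq hψ hC hC' (hsub i hin.1 hin.2) hx
      obtain ⟨hm1, hm2⟩ := swIdx_mem hj hin.1 hin.2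
      rw [← hCeq]
      exact hsub _ hm1 hm2
    · rw [swIdx_id hj (by omega)]
      exact hx
  intro i hi
  have := use_aut hρ (Psi ℓ j q) (Psi_inv ℓ j q) (Psi_adj ℓ j q hj) hcell (ANDb ℓ i)
  rwa [Psi_b ℓ j q hj hq i hi] at this

/-- Relating all in-terminals of a block contained in a cell. -/
lemma chain {ℓ : ℕ} {ψ : Set (Set (ANDVert ℓ))} {ρ : Setoid (ANDVert ℓ)}
    (hρ : IsCoarsestStableRefining (ANDgraph ℓ) ψ ρ) (hψ : IsBinBlockPartition ℓ ψ) :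
    ∀ m j q (C : Set (ANDVert ℓ)), j + m = ℓ → q < 2^j → C ∈ ψ →
    (∀ i, q * 2^m ≤ i → i < (q+1) * 2^m → ANDb ℓ i ∈ C) →
    ∀ t t', t < 2^m → t' < 2^m →
      ρ.r (ANDb ℓ (q * 2^m + t)) (ANDb ℓ (q * 2^m + t'))
  | 0 => by
      intro j q C hjm hq hC hsub t t' ht ht'
      interval_cases t
      interval_cases t'
      exact ρ.refl _
  | (m+1) => by
      intro j q C hjm hq hC hsub t t' ht ht'
      have hj : j < ℓ := by omega
      have hpm : (2:ℕ)^(m+1) = 2^m + 2^m := by rw [pow_succ]; omega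
      have hme : ℓ - j = m + 1 := by omega
      have hme1 : ℓ - j - 1 = m := by omega
      have hq' : 2*q < 2^(j+1) := by
        have : (2:ℕ)^(j+1) = 2^j + 2^j := by rw [pow_succ]; omega
        omega
      have hbound : (q+1) * 2^(m+1) ≤ 2^ℓ := by
        have := block_bound (le_of_lt hj) hq
        rwa [hme] at this
      have hQ : q * 2^(m+1) = 2*q * 2^m := by ring
      have e1 : (q+1) * 2^(m+1) = q * 2^(m+1) + 2^(m+1) := by ring
      have e2 : (2*q+1) * 2^m = 2*q*2^m + 2^m := by ring
      have hsub' : ∀ i, 2*q * 2^m ≤ i → i < (2*q+1) * 2^m → ANDb ℓ i ∈ C := by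
        intro i hi1 hi2
        exact hsub i (by omega) (by omega)
      -- swap relation for the whole block
      have hswap : ∀ i, i < 2^ℓ → ρ.r (ANDb ℓ i) (ANDb ℓ (swIdx ℓ j q i)) := by
        apply swap_rel hρ hψ hj hq hC
        intro i hi1 hi2
        rw [hme] at hi1 hi2
        exact hsub i hi1 hi2
      -- reduce an element of the block to the lower half
      have hred : ∀ t, t < 2^(m+1) →
          ρ.r (ANDb ℓ (q * 2^(m+1) + t))
            (ANDb ℓ (2*q * 2^m + (if t < 2^m then t else t - 2^m))) := by
        intro t ht
        by_cases h : t < 2^m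
        · rw [if_pos h, ← hQ]
        · rw [if_neg h]
          have hidx : swIdx ℓ j q (q * 2^(m+1) + t) = 2*q * 2^m + (t - 2^m) := by
            unfold swIdx
            rw [hme1, hme]
            split_ifs <;> omega
          have := hswap (q * 2^(m+1) + t) (by omega)
          rwa [hidx] at this
      have hlow : ∀ s s', s < 2^m → s' < 2^m →
          ρ.r (ANDb ℓ (2*q * 2^m + s)) (ANDb ℓ (2*q * 2^m + s')) :=
        chain hρ hψ m (j+1) (2*q) C (by omega) hq' hC hsub'
      have h1 := hred t ht
      have h2 := hred t' ht'
      have h3 := hlow (if t < 2^m then t else t - 2^m) (if t' < 2^m then t' else t' - 2^m)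
        (by split_ifs <;> omega) (by split_ifs <;> omega)
      exact ρ.trans h1 (ρ.trans h3 (ρ.symm h2))

/-- A merged in-terminal pair forces the out-terminals together. -/
lemma pair_rel {ℓ : ℕ} {ψ : Set (Set (ANDVert ℓ))} {ρ : Setoid (ANDVert ℓ)}
    (hρ : IsCoarsestStableRefining (ANDgraph ℓ) ψ ρ) (hψ : IsBinBlockPartition ℓ ψ)
    (hℓ : 1 ≤ ℓ) {p : ℕ} (hp : p < 2^(ℓ-1)) {C : Set (ANDVert ℓ)} (hC : C ∈ ψ)
    (h0 : ANDb ℓ (2*p) ∈ C) (h1 : ANDb ℓ (2*p+1) ∈ C) :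
    ρ.r (ANDa0 ℓ) (ANDa1 ℓ) := by
  have hj : ℓ - 1 < ℓ := by omega
  have hme : ℓ - (ℓ-1) = 1 := by omega
  have hme1 : ℓ - (ℓ-1) - 1 = 0 := by omega
  have hswp : ∀ i, swIdx ℓ (ℓ-1) p i = if i = 2*p then 2*p+1 else if i = 2*p+1 then 2*p else i := by
    intro i
    unfold swIdx
    rw [hme1, hme]
    have e1 : p * 2^1 = 2*p := by ring
    have e2 : (p+1) * 2^1 = 2*p + 2 := by ring
    have e3 : (2:ℕ)^0 = 1 := rfl
    split_ifs <;> omega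
  have hcell : ∀ C' ∈ ψ, ∀ x ∈ C', Psi ℓ (ℓ-1) p x ∈ C' := by
    intro C' hC' x hx
    obtain ⟨i, hi, rfl⟩ := cell_elt hψ hC' hx
    rw [Psi_b ℓ (ℓ-1) p hj hp i hi, hswp i]
    by_cases h2 : i = 2*p
    · rw [if_pos h2]
      rw [h2] at hx
      rwa [← cells_eq hψ hC hC' h0 hx]
    · rw [if_neg h2]
      by_cases h3 : i = 2*p+1
      · rw [if_pos h3]
        rw [h3] at hx
        rwa [← cells_eq hψ hC hC' h1 hx]
      · rw [if_neg h3]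
        exact hx
  have := use_aut hρ (Psi ℓ (ℓ-1) p) (Psi_inv ℓ (ℓ-1) p) (Psi_adj ℓ (ℓ-1) p hj) hcell
    (ANDa0 ℓ)
  rwa [Psi_a0 ℓ (ℓ-1) p hj, if_pos (by omega : ℓ - 1 + 1 = ℓ)] at this

/-- Let `ℓ ≥ 1`, let `ψ` be a partition of the in-terminals of `AND_ℓ`
into binary blocks and let `ρ` be the coarsest stable partition of the gadget refining
`ψ`.  Then `ρ` agrees with `ψ` on the in-terminals, and `ρ` distinguishes the
out-terminals `a₀, a₁` iff `ψ` distinguishes every in-terminal pair `(b_{2p}, b_{2p+1})`. -/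
theorem AND_gadget_key (ℓ : ℕ) (hℓ : 1 ≤ ℓ) (ψ : Set (Set (ANDVert ℓ)))
    (hψ : IsBinBlockPartition ℓ ψ) (ρ : Setoid (ANDVert ℓ))
    (hρ : IsCoarsestStableRefining (ANDgraph ℓ) ψ ρ) :
    AgreesWith ρ ψ ∧
    (¬ ρ.r (ANDa0 ℓ) (ANDa1 ℓ) ↔
      ∀ p < 2 ^ (ℓ - 1), ¬ ∃ C ∈ ψ, ANDb ℓ (2 * p) ∈ C ∧ ANDb ℓ (2 * p + 1) ∈ C) := by
  constructor
  · -- AgreesWith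
    intro u hu v hv
    constructor
    · intro huv
      rcases hρ.2.1 u v huv with h | ⟨h, _⟩
      · exact h
      · exact absurd hu h
    · rintro ⟨C, hC, huC, hvC⟩
      obtain ⟨j, hj, q, hq, rfl⟩ := hψ.1 C hC
      obtain ⟨i, hi, rfl⟩ := huC
      obtain ⟨i', hi', rfl⟩ := hvC
      have hsub : ∀ k, q * 2^(ℓ-j) ≤ k → k < (q+1) * 2^(ℓ-j) →
          ANDb ℓ k ∈ binBlock ℓ j q := fun k h1 h2 => ⟨k, ⟨h1, h2⟩, rfl⟩
      have := chain hρ hψ (ℓ-j) j q (binBlock ℓ j q) (by omega) hq hC hsub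
        (i - q * 2^(ℓ-j)) (i' - q * 2^(ℓ-j)) (by
          have e1 : (q+1) * 2^(ℓ-j) = q * 2^(ℓ-j) + 2^(ℓ-j) := by ring
          obtain ⟨h1, h2⟩ := hi
          omega) (by
          have e1 : (q+1) * 2^(ℓ-j) = q * 2^(ℓ-j) + 2^(ℓ-j) := by ring
          obtain ⟨h1, h2⟩ := hi'
          omega)
      rwa [(by obtain ⟨h1, _⟩ := hi; omega : q * 2^(ℓ-j) + (i - q * 2^(ℓ-j)) = i),
        (by obtain ⟨h1, _⟩ := hi'; omega : q * 2^(ℓ-j) + (i' - q * 2^(ℓ-j)) = i')] at this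
  · constructor
    · -- ρ distinguishes ⟹ all pairs split
      intro hnrel p hp hex
      rcases hex with ⟨C, hC, h0, h1⟩
      exact hnrel (pair_rel hρ hψ hℓ hp hC h0 h1)
    · -- all pairs split ⟹ ρ distinguishes
      intro hsplit hrel
      have hsing : ∀ i, i < 2^ℓ → Sing ρ (ANDb ℓ i) := by
        intro i hi u hu
        rcases hρ.2.1 u (ANDb ℓ i) hu with ⟨C, hC, huC, hbC⟩ | ⟨_, h⟩
        · obtain ⟨j, hj, q, hq, rfl⟩ := hψ.1 C hC
          have hjeq : j = ℓ := by
            by_contra hjne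
            have hjlt : j < ℓ := by omega
            have hps := pow_split hjlt
            have hBpos : 0 < 2^(ℓ-j-1) := Nat.pow_pos (by omega)
            have e1 : q * 2^(ℓ-j) = q * 2^(ℓ-j-1) + q * 2^(ℓ-j-1) := by
              rw [hps, Nat.mul_add]
            have e2 : (q+1) * 2^(ℓ-j) = q * 2^(ℓ-j) + 2^(ℓ-j) := by ring
            set p := q * 2^(ℓ-j-1) with hpdef
            have hplt : p < 2^(ℓ-1) := by
              have h2 : p < 2^j * 2^(ℓ-j-1) :=
                (Nat.mul_lt_mul_right hBpos).mpr hq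
              have h3 : (2:ℕ)^j * 2^(ℓ-j-1) = 2^(ℓ-1) := by
                rw [← pow_add]; congr 1; omega
              omega
            apply hsplit p hplt
            refine ⟨binBlock ℓ j q, hC, ⟨2*p, ⟨by omega, by omega⟩, rfl⟩,
              ⟨2*p+1, ⟨by omega, by omega⟩, rfl⟩⟩
          have hone : binBlock ℓ j q = {ANDb ℓ q} := by
            unfold binBlock
            rw [hjeq, Nat.sub_self, pow_zero, Nat.mul_one, Nat.mul_one]
            have : Set.Ico q (q+1) = {q} := by
              ext k
              simp only [Set.mem_Ico, Set.mem_singleton_iff]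
              omega
            rw [this, Set.image_singleton]
          rw [hone] at huC hbC
          rw [Set.mem_singleton_iff] at huC hbC
          rw [huC, hbC]
        · exfalso
          apply h
          rw [hψ.2.1]
          exact ⟨i, hi, rfl⟩
      have hall := key_s7 ℓ hℓ (ANDgraph ℓ) ρ id hρ.1 (fun a b h => h)
        (fun x y => Iff.rfl)
        (fun x w _ hns _ _ => absurd rfl (hns w))
        (fun i hi => hsing i hi)
      exact ANDa0_ne_a1 ℓ ((hall (ANDa0 ℓ)) (ANDa1 ℓ) (ρ.symm hrel)).symm
end

section
/- There is a constant c > 0 such that for every integer k ≥ 2 there exists a finite transition system S_k with at most c·2^k·k states, at most c·2^k·k² edges, and a constant labelling function, such that bcost(α) ≥ 2^{k−1}·k³, where α is the unit partition of the state set. In particular bcost(α) ∈ Ω((m+n)·log n), where n and m are the numbers of states and edges of S_k. -/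
/-- The partition `π` (together with the label partition it refines) yields a
bisimulation on the transition system with edge relation `E` and labelling `lab`:
`π`-equivalent states have equal labels and, for every cell, either both or neither
have an out-neighbour in that cell. -/
def BStable {V L : Type*} (E : V → V → Prop) (lab : V → L) (π : Setoid V) : Prop :=
  ∀ u v, π.r u v → lab u = lab v ∧
    ∀ w, ((∃ x, E u x ∧ π.r x w) ↔ (∃ x, E v x ∧ π.r x w))

/-- `π'` is obtained from `π` by the bisimulation refining operation `(R,S)` (for
`π`-closed `R`, `S`): cells disjoint from `S` are unchanged, and two vertices of `S`
stay in a common cell iff they were `π`-equivalent and, for every cell of `π` contained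
in `R`, either both or neither have an out-neighbour in that cell. -/
def IsBRefineOp {V : Type*} (E : V → V → Prop) (π : Setoid V) (R S : Set V)
    (π' : Setoid V) : Prop :=
  Closed π R ∧ Closed π S ∧
    ∀ u v, π'.r u v ↔
      (π.r u v ∧ (u ∈ S → ∀ w ∈ R,
        ((∃ x, E u x ∧ π.r x w) ↔ (∃ x, E v x ∧ π.r x w))))

/-- The cost of the bisimulation refining operation `(R,S)`: the number of edges from
`S` to `R`. -/
noncomputable def bOpCost {V : Type*} (E : V → V → Prop) (R S : Set V) : ℕ :=
  {p : V × V | E p.1 p.2 ∧ p.1 ∈ S ∧ p.2 ∈ R}.ncard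

/-- `BCostReach E lab π c` holds iff some sequence of effective bisimulation refining
operations starting from `π` and ending in a partition inducing a bisimulation has
total cost `c`. -/
inductive BCostReach {V L : Type*} (E : V → V → Prop) (lab : V → L) :
    Setoid V → ℕ → Prop
  | stable {π : Setoid V} (h : BStable E lab π) : BCostReach E lab π 0
  | step {π π' : Setoid V} {R S : Set V} {c : ℕ} (hop : IsBRefineOp E π R S π')
      (heff : π' ≠ π) (htail : BCostReach E lab π' c) :
      BCostReach E lab π (bOpCost E R S + c)

/-- `bcost`: the minimum total cost of a sequence of effective bisimulation refining
operations transforming `π` into a partition that induces a bisimulation. -/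
noncomputable def bcost {V L : Type*} (E : V → V → Prop) (lab : V → L)
    (π : Setoid V) : ℕ :=
  sInf {c : ℕ | BCostReach E lab π c}

namespace BcostLB


def s (k : ℕ) : ℕ := 2 ^ ((k + 1) / 2 + 2)

lemma s_pos (k : ℕ) : 0 < s k := Nat.pow_pos (by norm_num)

def nn (k : ℕ) : ℕ := (k + 1) * s k

def lvl {k : ℕ} (v : Fin (nn k)) : ℕ := v.val / s k

def Ed {k : ℕ} (u v : Fin (nn k)) : Prop := lvl u < lvl v

lemma lvl_le {k : ℕ} (v : Fin (nn k)) : lvl v ≤ k := by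
  have h : v.val < (k + 1) * s k := v.2
  have h2 := (Nat.div_lt_iff_lt_mul (s_pos k)).mpr h
  show v.val / s k ≤ k
  omega

lemma exists_lvl {k : ℕ} {t : ℕ} (ht : t ≤ k) : ∃ v : Fin (nn k), lvl v = t := by
  refine ⟨⟨t * s k, ?_⟩, ?_⟩
  · exact (Nat.mul_lt_mul_right (s_pos k)).mpr (by omega)
  · show t * s k / s k = t
    exact Nat.mul_div_cancel t (s_pos k)

def σ (k j : ℕ) : Setoid (Fin (nn k)) :=
  ⟨fun u v => lvl u = lvl v ∨ (lvl u ≤ j ∧ lvl v ≤ j),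
   ⟨fun _ => Or.inl rfl,
    by rintro u v (h | h); exacts [Or.inl h.symm, Or.inr ⟨h.2, h.1⟩],
    by rintro u v w (h | h) (h' | h') <;> [exact Or.inl (h.trans h'); skip; skip; skip] <;> omega⟩⟩

lemma sigma_rel {k : ℕ} (j : ℕ) (u v : Fin (nn k)) :
    (σ k j).r u v ↔ (lvl u = lvl v ∨ (lvl u ≤ j ∧ lvl v ≤ j)) := Iff.rfl

def Reach (k j : ℕ) (u w : Fin (nn k)) : Prop := ∃ x, Ed u x ∧ (σ k j).r x w

lemma reach_iff_le {k j : ℕ} (hjk : j ≤ k) {u w : Fin (nn k)} (hw : lvl w ≤ j) :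
    Reach k j u w ↔ lvl u < j := by
  constructor
  · rintro ⟨x, hx, hr⟩
    have hx' : lvl u < lvl x := hx
    rcases hr with hr | hr <;> omega
  · intro h
    obtain ⟨x, hx⟩ := exists_lvl hjk
    exact ⟨x, by simpa [Ed, hx] using h, Or.inr ⟨le_of_eq hx, hw⟩⟩

lemma reach_iff_gt {k j : ℕ} {u w : Fin (nn k)} (hw : j < lvl w) :
    Reach k j u w ↔ lvl u < lvl w := by
  constructor
  · rintro ⟨x, hx, hr⟩
    have hx' : lvl u < lvl x := hx
    rcases hr with hr | hr <;> omega
  · intro h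
    exact ⟨w, h, Or.inl rfl⟩

lemma reach_congr {k j : ℕ} {u u' : Fin (nn k)} (h : lvl u = lvl u') (w : Fin (nn k)) :
    Reach k j u w ↔ Reach k j u' w := by
  unfold Reach Ed
  rw [h]

def lab (k : ℕ) : Fin (nn k) → ℕ := fun _ => 0

lemma stable_zero (k : ℕ) : BStable Ed (lab k) (σ k 0) := by
  intro u v hr
  refine ⟨rfl, fun w => ?_⟩
  have h : lvl u = lvl v := by rcases hr with h | h <;> omega
  exact reach_congr h w

lemma not_stable {k j : ℕ} (hj1 : 1 ≤ j) (hjk : j ≤ k) : ¬ BStable Ed (lab k) (σ k j) := by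
  intro hst
  obtain ⟨u, hu⟩ := exists_lvl hjk
  obtain ⟨v, hv⟩ := exists_lvl (Nat.zero_le k)
  have hr : (σ k j).r v u := Or.inr ⟨by omega, by omega⟩
  have h2 := (hst v u hr).2 u
  rw [show (∃ x, Ed v x ∧ (σ k j).r x u) = Reach k j v u from rfl,
    show (∃ x, Ed u x ∧ (σ k j).r x u) = Reach k j u u from rfl] at h2
  rw [reach_iff_le hjk (by omega), reach_iff_le hjk (by omega)] at h2
  omega

def B (k j : ℕ) : Set (Fin (nn k)) := {x | lvl x ≤ j}

lemma key {k j : ℕ} (hj1 : 1 ≤ j) (hjk : j ≤ k) {R S : Set (Fin (nn k))}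
    (hS : B k j ⊆ S) (hR : B k j ⊆ R) (u v : Fin (nn k)) :
    ((σ k j).r u v ∧ (u ∈ S → ∀ w ∈ R, (Reach k j u w ↔ Reach k j v w)))
      ↔ (σ k (j - 1)).r u v := by
  by_cases he : lvl u = lvl v
  · exact iff_of_true ⟨Or.inl he, fun _ w _ => reach_congr he w⟩ (Or.inl he)
  · by_cases hb : lvl u ≤ j ∧ lvl v ≤ j
    · by_cases hj : lvl u = j ∨ lvl v = j
      · refine iff_of_false ?_ ?_
        · rintro ⟨-, hc⟩
          obtain ⟨w, hw⟩ := exists_lvl (Nat.zero_le k)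
          have := hc (hS hb.1) w (hR (by simp [B, hw]))
          rw [reach_iff_le hjk (by omega), reach_iff_le hjk (by omega)] at this
          omega
        · rintro (h | h) <;> omega
      · refine iff_of_true ⟨Or.inr hb, fun _ w hw => ?_⟩ (Or.inr ⟨by omega, by omega⟩)
        by_cases hwj : lvl w ≤ j
        · rw [reach_iff_le hjk hwj, reach_iff_le hjk hwj]
          omega
        · rw [reach_iff_gt (by omega), reach_iff_gt (by omega)]
          omega
    · refine iff_of_false ?_ ?_
      · rintro ⟨h | h, -⟩ <;> omega
      · rintro (h | h) <;> omega

lemma sigma_top (k : ℕ) : σ k k = ⊤ := by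
  apply Setoid.ext
  intro u v
  have h1 : (σ k k).r u v := Or.inr ⟨lvl_le u, lvl_le v⟩
  have h2 : (⊤ : Setoid (Fin (nn k))) u v := by rw [Setoid.top_def]; trivial
  exact iff_of_true h1 h2

lemma closed_all {k j : ℕ} {S : Set (Fin (nn k))} (hC : Closed (σ k j) S)
    {b : Fin (nn k)} (hb : lvl b ≤ j) (hbS : b ∈ S) : B k j ⊆ S :=
  fun x hx => (hC b x (Or.inr ⟨hb, hx⟩)).mp hbS

/-- If a refining op has `π' ≠ π`, the op must use the whole bottom block on both
sides, and the result is the next partition. -/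
lemma step_lemma {k j : ℕ} (hjk : j ≤ k) {R S : Set (Fin (nn k))} {π' : Setoid (Fin (nn k))}
    (hop : IsBRefineOp Ed (σ k j) R S π') (heff : π' ≠ σ k j) :
    1 ≤ j ∧ π' = σ k (j - 1) ∧ B k j ⊆ S ∧ B k j ⊆ R := by
  obtain ⟨hCR, hCS, hiff⟩ := hop
  -- rewrite hiff in terms of Reach
  have hiff' : ∀ u v, π'.r u v ↔
      ((σ k j).r u v ∧ (u ∈ S → ∀ w ∈ R, (Reach k j u w ↔ Reach k j v w))) := hiff
  have hj1 : 1 ≤ j := by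
    by_contra hj0
    apply heff
    apply Setoid.ext
    intro u v
    refine (hiff' u v).trans ⟨fun h => h.1, fun h => ⟨h, fun _ w _ => ?_⟩⟩
    have he : lvl u = lvl v := by rcases h with h | h <;> omega
    exact reach_congr he w
  have hBS : B k j ⊆ S := by
    by_contra hns
    have hdisj : ∀ x : Fin (nn k), lvl x ≤ j → x ∉ S := by
      intro x hx hxS
      exact hns (closed_all hCS hx hxS)
    apply heff
    apply Setoid.ext
    intro u v
    refine (hiff' u v).trans ⟨fun h => h.1, fun h => ⟨h, fun huS w _ => ?_⟩⟩
    have hgt : j < lvl u := by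
      by_contra hle
      exact hdisj u (by omega) huS
    have he : lvl u = lvl v := by rcases h with h | h <;> omega
    exact reach_congr he w
  have hBR : B k j ⊆ R := by
    by_contra hns
    have hdisj : ∀ x : Fin (nn k), lvl x ≤ j → x ∉ R := by
      intro x hx hxR
      exact hns (closed_all hCR hx hxR)
    apply heff
    apply Setoid.ext
    intro u v
    refine (hiff' u v).trans ⟨fun h => h.1, fun h => ⟨h, fun _ w hwR => ?_⟩⟩
    have hw : j < lvl w := by
      by_contra hle
      exact hdisj w (by omega) hwR
    rcases h with he | hb
    · exact reach_congr he w
    · rw [reach_iff_gt hw, reach_iff_gt hw]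
      omega
  refine ⟨hj1, ?_, hBS, hBR⟩
  apply Setoid.ext
  intro u v
  exact (hiff' u v).trans (key hj1 hjk hBS hBR u v)

def costlb (k j : ℕ) : ℕ := (j + 1) / 2 * s k * ((j + 1) * s k - (j + 1) / 2 * s k)

lemma cost_lb {k j : ℕ} (hj1 : 1 ≤ j) (hjk : j ≤ k) {R S : Set (Fin (nn k))}
    (hS : B k j ⊆ S) (hR : B k j ⊆ R) :
    costlb k j ≤ bOpCost Ed R S := by
  set a := (j + 1) / 2 with ha
  have ha1 : 1 ≤ a := by omega
  have haj : a ≤ j := by omega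
  have hA : a * s k < nn k := by
    have : a < k + 1 := by omega
    exact lt_of_le_of_lt (Nat.mul_le_mul_right _ (by omega : a ≤ k))
      ((Nat.mul_lt_mul_right (s_pos k)).mpr (by omega))
  have hB : (j + 1) * s k ≤ nn k := Nat.mul_le_mul_right _ (by omega)
  set A := a * s k with hAdef
  set Bv := (j + 1) * s k with hBdef
  let f : Fin A × Fin (Bv - A) → Fin (nn k) × Fin (nn k) :=
    fun p => (⟨p.1.val, by omega⟩, ⟨A + p.2.val, by omega⟩)
  have hinj : Function.Injective f := by
    intro p q h
    have h1 : (p.1 : ℕ) = q.1 := congrArg (fun x => (x.1 : Fin (nn k)).val) h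
    have h2 : A + (p.2 : ℕ) = A + q.2 := congrArg (fun x => (x.2 : Fin (nn k)).val) h
    ext <;> omega
  have hsub : f '' Set.univ ⊆ {p : Fin (nn k) × Fin (nn k) | Ed p.1 p.2 ∧ p.1 ∈ S ∧ p.2 ∈ R} := by
    rintro - ⟨p, -, rfl⟩
    have hp1 : (p.1 : ℕ) < A := p.1.2
    have hp2 : (p.2 : ℕ) < Bv - A := p.2.2
    have e1 : lvl (f p).1 = (p.1 : ℕ) / s k := rfl
    have e2 : lvl (f p).2 = (A + (p.2 : ℕ)) / s k := rfl
    have hl1 : (p.1 : ℕ) / s k < a :=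
      (Nat.div_lt_iff_lt_mul (s_pos k)).mpr (by omega)
    have hl2a : a ≤ (A + (p.2 : ℕ)) / s k :=
      (Nat.le_div_iff_mul_le (s_pos k)).mpr (by omega)
    have hl2b : (A + (p.2 : ℕ)) / s k < j + 1 :=
      (Nat.div_lt_iff_lt_mul (s_pos k)).mpr (by omega)
    refine ⟨?_, hS ?_, hR ?_⟩
    · show lvl (f p).1 < lvl (f p).2
      omega
    · show lvl (f p).1 ≤ j
      omega
    · show lvl (f p).2 ≤ j
      omega
  calc costlb k j = A * (Bv - A) := rfl
    _ = (Set.univ : Set (Fin A × Fin (Bv - A))).ncard := by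
        rw [Set.ncard_univ]
        simp [Nat.card_eq_fintype_card]
    _ = (f '' Set.univ).ncard := (Set.ncard_image_of_injective _ hinj).symm
    _ ≤ bOpCost Ed R S := Set.ncard_le_ncard hsub (Set.toFinite _)

def F (k j : ℕ) : ℕ := ∑ i ∈ Finset.range j, costlb k (i + 1)

lemma main_bound {k : ℕ} {π : Setoid (Fin (nn k))} {c : ℕ}
    (h : BCostReach Ed (lab k) π c) : ∀ j ≤ k, π = σ k j → F k j ≤ c := by
  induction h with
  | stable hst =>
    intro j hj hpi
    subst hpi
    rcases Nat.eq_zero_or_pos j with rfl | hj1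
    · simp [F]
    · exact absurd hst (not_stable hj1 hj)
  | step hop heff htail ih =>
    intro j hj hpi
    subst hpi
    obtain ⟨hj1, hpi', hBS, hBR⟩ := step_lemma hj hop heff
    have ht := ih (j - 1) (by omega) hpi'
    have hc := cost_lb hj1 hj hBS hBR
    have hF : F k j = F k (j - 1) + costlb k j := by
      have hjj : j = (j - 1) + 1 := by omega
      rw [hjj, F, Finset.sum_range_succ, ← hjj]
      rfl
    rw [hF]
    omega

lemma reachable {k : ℕ} : ∀ j, j ≤ k → ∃ c, BCostReach Ed (lab k) (σ k j) c := by
  intro j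
  induction j with
  | zero => exact fun _ => ⟨0, .stable (stable_zero k)⟩
  | succ j ih =>
    intro hjk
    obtain ⟨c, hc⟩ := ih (by omega)
    have hop : IsBRefineOp Ed (σ k (j + 1)) Set.univ Set.univ (σ k j) := by
      refine ⟨fun u v _ => Iff.rfl, fun u v _ => Iff.rfl, fun u v => ?_⟩
      exact (key (by omega) hjk (Set.subset_univ _) (Set.subset_univ _) u v).symm
    have hne : σ k j ≠ σ k (j + 1) := by
      intro he
      obtain ⟨u, hu⟩ := exists_lvl hjk
      obtain ⟨v, hv⟩ := exists_lvl (Nat.zero_le k)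
      have h1 : (σ k (j + 1)).r u v := Or.inr ⟨by omega, by omega⟩
      rw [← he] at h1
      rcases h1 with h | h <;> omega
    exact ⟨_, .step hop hne hc⟩

lemma sq_lower {k j : ℕ} (hj1 : 1 ≤ j) : j ^ 2 * s k ^ 2 ≤ 4 * costlb k j := by
  set a := (j + 1) / 2 with ha
  have h1 : (j + 1) * s k - a * s k = (j + 1 - a) * s k := by
    rw [Nat.sub_mul]
  have h2 : costlb k j = (a * (j + 1 - a)) * (s k * s k) := by
    rw [costlb, h1]; ring
  have hj2a : j ≤ 2 * a := by omega
  have hab : a ≤ j + 1 - a := by omega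
  have key2 : j ^ 2 ≤ 4 * (a * (j + 1 - a)) := by
    calc j ^ 2 = j * j := sq j
      _ ≤ (2 * a) * (2 * a) := Nat.mul_le_mul hj2a hj2a
      _ = 4 * (a * a) := by ring
      _ ≤ 4 * (a * (j + 1 - a)) := by
          exact Nat.mul_le_mul_left 4 (Nat.mul_le_mul_left a hab)
  calc j ^ 2 * s k ^ 2 = j ^ 2 * (s k * s k) := by ring
    _ ≤ (4 * (a * (j + 1 - a))) * (s k * s k) := Nat.mul_le_mul_right _ key2
    _ = 4 * costlb k j := by rw [h2]; ring

lemma sum_sq (k : ℕ) : k ^ 3 ≤ 3 * ∑ i ∈ Finset.range k, (i + 1) ^ 2 := by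
  induction k with
  | zero => simp
  | succ k ih =>
    rw [Finset.sum_range_succ, Nat.mul_add]
    have hexp : (k + 1) ^ 3 = k ^ 3 + 3 * k ^ 2 + 3 * k + 1 := by ring
    have hexp2 : (k + 1) ^ 2 = k ^ 2 + 2 * k + 1 := by ring
    omega

lemma F_lower {k : ℕ} (hk : 1 ≤ k) : 2 ^ (k - 1) * k ^ 3 ≤ F k k := by
  have h1 : k ^ 3 * s k ^ 2 ≤ 12 * F k k := by
    have h2 : ∀ i ∈ Finset.range k, 3 * ((i + 1) ^ 2 * s k ^ 2) ≤ 12 * costlb k (i + 1) := by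
      intro i _
      have := sq_lower (k := k) (j := i + 1) (by omega)
      omega
    calc k ^ 3 * s k ^ 2 ≤ (3 * ∑ i ∈ Finset.range k, (i + 1) ^ 2) * s k ^ 2 :=
          Nat.mul_le_mul_right _ (sum_sq k)
      _ = ∑ i ∈ Finset.range k, 3 * ((i + 1) ^ 2 * s k ^ 2) := by
          rw [Finset.mul_sum, Finset.sum_mul]
          exact Finset.sum_congr rfl (fun i _ => by ring)
      _ ≤ ∑ i ∈ Finset.range k, 12 * costlb k (i + 1) := Finset.sum_le_sum h2
      _ = 12 * F k k := by rw [F, Finset.mul_sum]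
  have hs2 : 2 ^ (k + 4) ≤ s k ^ 2 := by
    have : s k ^ 2 = 2 ^ (((k + 1) / 2 + 2) * 2) := by
      rw [s, ← pow_mul]
    rw [this]
    exact Nat.pow_le_pow_right (by norm_num) (by omega)
  have h3 : 12 * (2 ^ (k - 1) * k ^ 3) ≤ 12 * F k k := by
    have e : k + 4 = (k - 1) + 5 := by omega
    calc 12 * (2 ^ (k - 1) * k ^ 3) ≤ 32 * (2 ^ (k - 1) * k ^ 3) := by
          apply Nat.mul_le_mul_right
          norm_num
      _ = k ^ 3 * 2 ^ (k + 4) := by rw [e, pow_add]; ring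
      _ ≤ k ^ 3 * s k ^ 2 := Nat.mul_le_mul_left _ hs2
      _ ≤ 12 * F k k := h1
  exact Nat.le_of_mul_le_mul_left h3 (by norm_num)

lemma bcost_ge {k : ℕ} (hk : 1 ≤ k) : 2 ^ (k - 1) * k ^ 3 ≤ bcost Ed (lab k) ⊤ := by
  obtain ⟨c0, hc0⟩ := reachable (k := k) k le_rfl
  rw [sigma_top] at hc0
  have hne : {c : ℕ | BCostReach Ed (lab k) ⊤ c}.Nonempty := ⟨c0, hc0⟩
  have hmem : BCostReach Ed (lab k) ⊤ (sInf {c : ℕ | BCostReach Ed (lab k) ⊤ c}) :=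
    Nat.sInf_mem hne
  have h2 := main_bound hmem k le_rfl (sigma_top k).symm
  exact le_trans (F_lower hk) h2

lemma edges_le (k : ℕ) :
    {p : Fin (nn k) × Fin (nn k) | Ed p.1 p.2}.ncard ≤ nn k * nn k := by
  calc {p : Fin (nn k) × Fin (nn k) | Ed p.1 p.2}.ncard
      ≤ (Set.univ : Set (Fin (nn k) × Fin (nn k))).ncard :=
        Set.ncard_le_ncard (Set.subset_univ _) Set.finite_univ
    _ = nn k * nn k := by rw [Set.ncard_univ]; simp [Nat.card_eq_fintype_card]

lemma nn_le {k : ℕ} (hk : 1 ≤ k) : nn k ≤ 8 * 2 ^ k * k := by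
  have hs : s k ≤ 4 * 2 ^ k := by
    rw [s]
    calc 2 ^ ((k + 1) / 2 + 2) ≤ 2 ^ (k + 2) :=
          Nat.pow_le_pow_right (by norm_num) (by omega)
      _ = 4 * 2 ^ k := by rw [pow_add]; ring
  calc nn k = (k + 1) * s k := rfl
    _ ≤ (2 * k) * (4 * 2 ^ k) := Nat.mul_le_mul (by omega) hs
    _ = 8 * 2 ^ k * k := by ring

lemma nn_sq_le {k : ℕ} (hk : 1 ≤ k) : nn k * nn k ≤ 128 * 2 ^ k * k ^ 2 := by
  have hs2 : s k * s k ≤ 32 * 2 ^ k := by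
    rw [s, ← pow_add]
    calc 2 ^ ((k + 1) / 2 + 2 + ((k + 1) / 2 + 2)) ≤ 2 ^ (k + 5) :=
          Nat.pow_le_pow_right (by norm_num) (by omega)
      _ = 32 * 2 ^ k := by rw [pow_add]; ring
  calc nn k * nn k = ((k + 1) * (k + 1)) * (s k * s k) := by rw [nn]; ring
    _ ≤ ((2 * k) * (2 * k)) * (32 * 2 ^ k) :=
        Nat.mul_le_mul (Nat.mul_le_mul (by omega) (by omega)) hs2
    _ = 128 * 2 ^ k * k ^ 2 := by ring

lemma log_le {k : ℕ} (hk : 1 ≤ k) : Nat.log 2 (nn k) ≤ 2 * k + 3 := by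
  have hkk : k ≤ 2 ^ k := Nat.le_of_lt (Nat.lt_two_pow_self (n := k))
  have h1 : nn k ≤ 2 ^ (2 * k + 3) := by
    calc nn k ≤ 8 * 2 ^ k * k := nn_le hk
      _ ≤ 8 * 2 ^ k * 2 ^ k := Nat.mul_le_mul_left _ hkk
      _ = 2 ^ (2 * k + 3) := by rw [two_mul, pow_add, pow_add]; ring
  calc Nat.log 2 (nn k) ≤ Nat.log 2 (2 ^ (2 * k + 3)) := Nat.log_mono_right h1
    _ = 2 * k + 3 := Nat.log_pow (by norm_num) _

end BcostLB

/-- There is a constant `c > 0` such that for every `k ≥ 2` there is a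
finite transition system with a constant labelling, at most `c·2^k·k` states and at most
`c·2^k·k²` edges, on which the unit partition `α = ⊤` has `bcost(α) ≥ 2^{k-1}·k³`; in
particular `bcost(α) ∈ Ω((m+n)·log n)` on these systems. -/


theorem bcost_lower_bound : ∃ c : ℕ, 0 < c ∧ ∀ k : ℕ, 2 ≤ k →
    ∃ (n : ℕ) (E : Fin n → Fin n → Prop) (lab : Fin n → ℕ),
      (∀ u v, lab u = lab v) ∧
      n ≤ c * 2 ^ k * k ∧
      {p : Fin n × Fin n | E p.1 p.2}.ncard ≤ c * 2 ^ k * k ^ 2 ∧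
      2 ^ (k - 1) * k ^ 3 ≤ bcost E lab ⊤ ∧
      (n + {p : Fin n × Fin n | E p.1 p.2}.ncard) * Nat.log 2 n ≤ c * bcost E lab ⊤ := by
  refine ⟨2048, by norm_num, fun k hk => ?_⟩
  have hk1 : 1 ≤ k := by omega
  refine ⟨BcostLB.nn k, BcostLB.Ed, BcostLB.lab k, fun u v => rfl, ?_, ?_, ?_, ?_⟩
  · calc BcostLB.nn k ≤ 8 * 2 ^ k * k := BcostLB.nn_le hk1
      _ ≤ 2048 * 2 ^ k * k :=
        Nat.mul_le_mul_right _ (Nat.mul_le_mul_right _ (by norm_num))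
  · calc {p : Fin (BcostLB.nn k) × Fin (BcostLB.nn k) | BcostLB.Ed p.1 p.2}.ncard
        ≤ BcostLB.nn k * BcostLB.nn k := BcostLB.edges_le k
      _ ≤ 128 * 2 ^ k * k ^ 2 := BcostLB.nn_sq_le hk1
      _ ≤ 2048 * 2 ^ k * k ^ 2 :=
        Nat.mul_le_mul_right _ (Nat.mul_le_mul_right _ (by norm_num))
  · exact BcostLB.bcost_ge hk1
  · have hb := BcostLB.bcost_ge (k := k) hk1
    have hm := (BcostLB.edges_le k).trans (BcostLB.nn_sq_le hk1)
    have hn := BcostLB.nn_le hk1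
    have hlog := BcostLB.log_le hk1
    have hlog4 : Nat.log 2 (BcostLB.nn k) ≤ 4 * k := by omega
    have hkk2 : k ≤ k ^ 2 := by nlinarith
    have hsum : BcostLB.nn k + {p : Fin (BcostLB.nn k) × Fin (BcostLB.nn k) |
        BcostLB.Ed p.1 p.2}.ncard ≤ 136 * 2 ^ k * k ^ 2 := by
      have h8 : 8 * 2 ^ k * k ≤ 8 * 2 ^ k * k ^ 2 := Nat.mul_le_mul_left _ hkk2
      have h136 : 8 * 2 ^ k * k ^ 2 + 128 * 2 ^ k * k ^ 2 = 136 * 2 ^ k * k ^ 2 := by ring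
      omega
    have hpow : 2 ^ k = 2 * 2 ^ (k - 1) := by
      cases k with
      | zero => omega
      | succ n => rw [pow_succ, Nat.succ_sub_one]; ring
    calc (BcostLB.nn k + {p : Fin (BcostLB.nn k) × Fin (BcostLB.nn k) |
            BcostLB.Ed p.1 p.2}.ncard) * Nat.log 2 (BcostLB.nn k)
        ≤ (136 * 2 ^ k * k ^ 2) * (4 * k) := Nat.mul_le_mul hsum hlog4
      _ = 1088 * (2 ^ (k - 1) * k ^ 3) := by rw [hpow]; ring
      _ ≤ 2048 * (2 ^ (k - 1) * k ^ 3) := Nat.mul_le_mul_right _ (by norm_num)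
      _ ≤ 2048 * bcost BcostLB.Ed (BcostLB.lab k) ⊤ := Nat.mul_le_mul_left _ hb
end
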